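/- arXiv:1111.1912 — 6 statements merged into one kernel-verified Lean document; each statement's English description precedes it below -/
import Mathlib

section
/- A function h : [0,T] → ℝ which is càdlàg (right-continuous with left limits) and injective is of bounded variation on [0,T] if and only if its jumps are absolutely summable, i.e., ∑_{0 < s ≤ T} |h(s) - h(s-)| < ∞. -/
open Set Filter Function
open scoped NNReal ENNReal


/-- `h` is càdlàg on `[0,T]`: right-continuous on `[0,T)` and possessing
left limits on `(0,T]`. -/
def CadlagOn (h : ℝ → ℝ) (T : ℝ) : Prop :=
  (∀ t ∈ Set.Ico (0:ℝ) T, ContinuousWithinAt h (Set.Ici t) t) ∧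
  (∀ t ∈ Set.Ioc (0:ℝ) T, ∃ L : ℝ, Filter.Tendsto h (nhdsWithin t (Set.Iio t)) (nhds L))

-- left limit equals Function.leftLim
lemma cad_tendsto_leftLim {h : ℝ → ℝ} {T : ℝ} (hc : CadlagOn h T) {s : ℝ}
    (hs : s ∈ Set.Ioc (0:ℝ) T) :
    Filter.Tendsto h (nhdsWithin s (Set.Iio s)) (nhds (Function.leftLim h s)) := by
  obtain ⟨L, hL⟩ := hc.2 s hs
  rwa [leftLim_eq_of_tendsto hL]

-- single jump bound
lemma jump_le_var {h : ℝ → ℝ} {T : ℝ} (hc : CadlagOn h T) {a s : ℝ}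
    (ha : 0 ≤ a) (has : a < s) (hsT : s ≤ T) :
    edist (h s) (Function.leftLim h s) ≤ eVariationOn h (Set.Icc 0 T ∩ Set.Icc a s) := by
  have hL := cad_tendsto_leftLim hc ⟨lt_of_le_of_lt ha has, hsT⟩
  have h1 : Filter.Tendsto (fun u => edist (h s) (h u)) (nhdsWithin s (Set.Iio s))
      (nhds (edist (h s) (Function.leftLim h s))) :=
    (tendsto_const_nhds.edist hL)
  refine le_of_tendsto h1 ?_
  filter_upwards [Ioo_mem_nhdsLT_of_mem (⟨has, le_rfl⟩ : s ∈ Set.Ioc a s)] with u hu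
  exact eVariationOn.edist_le h
    ⟨⟨le_trans ha has.le, hsT⟩, ⟨has.le, le_rfl⟩⟩
    ⟨⟨le_trans ha hu.1.le, le_trans hu.2.le hsT⟩, ⟨hu.1.le, hu.2.le⟩⟩

lemma jumpsum_le_aux {h : ℝ → ℝ} {T : ℝ} (hc : CadlagOn h T) :
    ∀ n : ℕ, ∀ F : Finset (Set.Ioc (0:ℝ) T), F.card = n → ∀ b : ℝ, 0 ≤ b → b ≤ T →
      (∀ s ∈ F, (s : ℝ) ≤ b) →
      (∑ s ∈ F, edist (h s) (Function.leftLim h s)) ≤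
        eVariationOn h (Set.Icc 0 T ∩ Set.Icc 0 b) := by
  intro n
  induction n with
  | zero =>
    intro F hF b _ _ _
    rw [Finset.card_eq_zero.mp hF]
    simp
  | succ n ih =>
    intro F hF b hb0 hbT hFb
    have hne : F.Nonempty := Finset.card_pos.mp (hF ▸ n.succ_pos)
    set s' := F.max' hne with hs'
    have hs'F : s' ∈ F := F.max'_mem hne
    set F' := F.erase s' with hF'
    have hcard : F'.card = n := by
      rw [hF', Finset.card_erase_of_mem hs'F, hF]; rfl
    have hlt : ∀ s ∈ F', (s : ℝ) < (s' : ℝ) := by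
      intro s hs
      have h1 : s ≤ s' := F.le_max' s (Finset.mem_of_mem_erase hs)
      have h2 : s ≠ s' := Finset.ne_of_mem_erase hs
      exact lt_of_le_of_ne (Subtype.coe_le_coe.mpr h1) (fun he => h2 (Subtype.ext he))
    set c : ℝ := if hF'e : F'.Nonempty then ((F'.max' hF'e : Set.Ioc (0:ℝ) T) : ℝ) else 0 with hcdef
    have hc0 : 0 ≤ c := by
      rw [hcdef]
      split
      · next hF'e => exact ((F'.max' hF'e).2.1).le
      · exact le_rfl
    have hcs' : c < (s' : ℝ) := by
      rw [hcdef]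
      split
      · next hF'e => exact hlt _ (F'.max'_mem hF'e)
      · exact s'.2.1
    have hcF' : ∀ s ∈ F', (s : ℝ) ≤ c := by
      intro s hs
      rw [hcdef]
      split
      · next hF'e => exact Subtype.coe_le_coe.mpr (F'.le_max' s hs)
      · next hF'e => exact absurd ⟨s, hs⟩ hF'e
    have hcT : c ≤ T := le_trans hcs'.le s'.2.2
    have hsum : (∑ s ∈ F, edist (h s) (Function.leftLim h s)) =
        (∑ s ∈ F', edist (h s) (Function.leftLim h s)) +
          edist (h s') (Function.leftLim h s') := by
      rw [hF', Finset.sum_erase_add _ _ hs'F]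
    rw [hsum]
    have h1 := ih F' hcard c hc0 hcT hcF'
    have h2 := jump_le_var hc hc0 hcs' s'.2.2
    calc (∑ s ∈ F', edist (h s) (Function.leftLim h s)) +
          edist (h s') (Function.leftLim h s')
        ≤ eVariationOn h (Set.Icc 0 T ∩ Set.Icc 0 c) +
          eVariationOn h (Set.Icc 0 T ∩ Set.Icc c (s' : ℝ)) := add_le_add h1 h2
      _ = eVariationOn h (Set.Icc 0 T ∩ Set.Icc 0 (s' : ℝ)) :=
          eVariationOn.Icc_add_Icc h hc0 hcs'.le ⟨hc0, hcT⟩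
      _ ≤ eVariationOn h (Set.Icc 0 T ∩ Set.Icc 0 b) := by
          apply eVariationOn.mono
          exact Set.inter_subset_inter_right _ (Set.Icc_subset_Icc le_rfl (hFb s' hs'F))

lemma jumpsum_le {h : ℝ → ℝ} {T : ℝ} (hT : 0 < T) (hc : CadlagOn h T)
    (F : Finset (Set.Ioc (0:ℝ) T)) :
    (∑ s ∈ F, edist (h s) (Function.leftLim h s)) ≤ eVariationOn h (Set.Icc 0 T) := by
  have := jumpsum_le_aux hc F.card F rfl T hT.le le_rfl (fun s _ => s.2.2)
  rwa [Set.inter_self] at this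

lemma forward_dir {h : ℝ → ℝ} {T : ℝ} (hT : 0 < T) (hc : CadlagOn h T)
    (hBV : BoundedVariationOn h (Set.Icc 0 T)) :
    Summable (fun s : Set.Ioc (0:ℝ) T => |h s - Function.leftLim h s|) := by
  have heq : (fun s : Set.Ioc (0:ℝ) T => |h s - Function.leftLim h s|) =
      fun s : Set.Ioc (0:ℝ) T => ((‖h s - Function.leftLim h s‖₊ : ℝ≥0) : ℝ) := by
    funext s
    rw [coe_nnnorm, Real.norm_eq_abs]
  rw [heq, NNReal.summable_coe, ← ENNReal.tsum_coe_ne_top_iff_summable]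
  have : (∑' s : Set.Ioc (0:ℝ) T, ((‖h s - Function.leftLim h s‖₊ : ℝ≥0) : ℝ≥0∞)) ≤
      eVariationOn h (Set.Icc 0 T) := by
    rw [ENNReal.tsum_eq_iSup_sum]
    refine iSup_le fun F => ?_
    refine le_trans (le_of_eq ?_) (jumpsum_le hT hc F)
    exact Finset.sum_congr rfl fun s _ => (edist_eq_enorm_sub _ _).symm
  exact fun htop => hBV (top_le_iff.mp (htop ▸ this))

lemma cad_bounded {h : ℝ → ℝ} {T : ℝ} (hT : 0 < T) (hc : CadlagOn h T) :
    ∃ M : ℝ, ∀ t ∈ Set.Icc (0:ℝ) T, |h t| ≤ M := by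
  have loc : ∀ t ∈ Set.Icc (0:ℝ) T, ∃ U ∈ nhds t, ∃ M : ℝ,
      ∀ u ∈ U ∩ Set.Icc (0:ℝ) T, |h u| ≤ M := by
    intro t ht
    -- right bound
    have hR : ∃ δ1 > (0:ℝ), ∃ B1 : ℝ, ∀ u ∈ Set.Icc (0:ℝ) T,
        t ≤ u → u < t + δ1 → |h u| ≤ B1 := by
      rcases lt_or_eq_of_le ht.2 with htT | htT
      · have hcw := hc.1 t ⟨ht.1, htT⟩
        have hev : ∀ᶠ u in nhdsWithin t (Set.Ici t), |h u| ≤ |h t| + 1 := by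
          have : Filter.Tendsto (fun u => |h u|) (nhdsWithin t (Set.Ici t))
              (nhds (|h t|)) := hcw.abs
          exact this.eventually_le_const (by linarith)
        obtain ⟨δ, hδ, hball⟩ := Metric.mem_nhdsWithin_iff.mp hev
        refine ⟨δ, hδ, |h t| + 1, fun u _ h1 h2 => ?_⟩
        exact hball ⟨by rw [Metric.mem_ball, Real.dist_eq, abs_lt]; constructor <;> linarith, h1⟩
      · refine ⟨1, one_pos, |h T|, fun u hu h1 _ => ?_⟩
        have : u = T := le_antisymm hu.2 (htT ▸ h1)
        rw [this]
    -- left bound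
    have hL : ∃ δ2 > (0:ℝ), ∃ B2 : ℝ, ∀ u ∈ Set.Icc (0:ℝ) T,
        u < t → t - δ2 < u → |h u| ≤ B2 := by
      rcases eq_or_lt_of_le ht.1 with ht0 | ht0
      · exact ⟨1, one_pos, 0, fun u hu h1 _ => absurd (lt_of_lt_of_le h1 (ht0 ▸ hu.1))
          (lt_irrefl u)⟩
      · obtain ⟨L, hLt⟩ := hc.2 t ⟨ht0, ht.2⟩
        have hev : ∀ᶠ u in nhdsWithin t (Set.Iio t), |h u| ≤ |L| + 1 := by
          have : Filter.Tendsto (fun u => |h u|) (nhdsWithin t (Set.Iio t))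
              (nhds (|L|)) := hLt.abs
          exact this.eventually_le_const (by linarith)
        obtain ⟨δ, hδ, hball⟩ := Metric.mem_nhdsWithin_iff.mp hev
        refine ⟨δ, hδ, |L| + 1, fun u _ h1 h2 => ?_⟩
        exact hball ⟨by rw [Metric.mem_ball, Real.dist_eq, abs_lt]; constructor <;> linarith, h1⟩
    obtain ⟨δ1, hδ1, B1, hB1⟩ := hR
    obtain ⟨δ2, hδ2, B2, hB2⟩ := hL
    refine ⟨Metric.ball t (min δ1 δ2), Metric.ball_mem_nhds t (lt_min hδ1 hδ2),
      max B1 B2, fun u hu => ?_⟩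
    obtain ⟨hub, huI⟩ := hu
    rw [Metric.mem_ball, Real.dist_eq, abs_lt] at hub
    rcases le_or_gt t u with hut | hut
    · exact le_trans (hB1 u huI hut (by have := hub.2; have := min_le_left δ1 δ2; linarith))
        (le_max_left _ _)
    · exact le_trans (hB2 u huI hut (by have := hub.1; have := min_le_right δ1 δ2; linarith))
        (le_max_right _ _)
  choose U hU M hM using loc
  obtain ⟨F, hF⟩ := (isCompact_Icc : IsCompact (Set.Icc (0:ℝ) T)).elim_nhds_subcover'
    (fun x hx => U x hx) (fun x hx => hU x hx)
  refine ⟨∑ x ∈ F, |M x.1 x.2|, fun t ht => ?_⟩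
  obtain ⟨x, hxF, hxU⟩ := Set.mem_iUnion₂.mp (hF ht)
  calc |h t| ≤ M x.1 x.2 := hM x.1 x.2 t ⟨hxU, ht⟩
    _ ≤ |M x.1 x.2| := le_abs_self _
    _ ≤ ∑ y ∈ F, |M y.1 y.2| :=
        Finset.single_le_sum (f := fun y : ↥(Set.Icc (0:ℝ) T) => |M y.1 y.2|) (fun y _ => abs_nonneg _) hxF

lemma crossing_up {h : ℝ → ℝ} {T : ℝ} (hc : CadlagOn h T) {a b y : ℝ}
    (ha : 0 ≤ a) (hbT : b ≤ T) (hab : a ≤ b) (hya : h a < y) (hyb : y < h b) :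
    ∃ s ∈ Set.Ioc a b, Function.leftLim h s ≤ y ∧ y ≤ h s := by
  have hab' : a < b := by
    rcases lt_or_eq_of_le hab with h' | h'
    · exact h'
    · exact absurd (h' ▸ hyb) (not_lt.mpr hya.le)
  set A := {u : ℝ | u ∈ Set.Icc a b ∧ y ≤ h u} with hA
  have hbA : b ∈ A := ⟨⟨hab, le_rfl⟩, hyb.le⟩
  have hAne : A.Nonempty := ⟨b, hbA⟩
  have hbdd : BddBelow A := ⟨a, fun u hu => hu.1.1⟩
  set s := sInf A with hs
  have hsa : a ≤ s := le_csInf hAne fun u hu => hu.1.1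
  have hsb : s ≤ b := csInf_le hbdd hbA
  have hlt : ∀ u, a ≤ u → u < s → h u < y := by
    intro u hau hus
    by_contra hcon
    push_neg at hcon
    exact absurd (csInf_le hbdd ⟨⟨hau, le_trans hus.le hsb⟩, hcon⟩) (not_le.mpr hus)
  have has : a < s := by
    have hcw := hc.1 a ⟨ha, lt_of_lt_of_le hab' hbT⟩
    have hev : ∀ᶠ u in nhdsWithin a (Set.Ici a), h u < y := hcw.eventually_lt_const hya
    obtain ⟨δ, hδ, hball⟩ := Metric.mem_nhdsWithin_iff.mp hev
    have hds : a + δ ≤ s := by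
      apply le_csInf hAne
      intro u hu
      by_contra hcon
      push_neg at hcon
      have hmem : u ∈ Metric.ball a δ ∩ Set.Ici a := by
        constructor
        · rw [Metric.mem_ball, Real.dist_eq, abs_lt]
          constructor
          · linarith [hu.1.1]
          · linarith
        · exact hu.1.1
      exact absurd hu.2 (not_le.mpr (hball hmem))
    linarith
  have hsIoc : s ∈ Set.Ioc (0:ℝ) T := ⟨lt_of_le_of_lt ha has, le_trans hsb hbT⟩
  have hLs := cad_tendsto_leftLim hc hsIoc
  have hLle : Function.leftLim h s ≤ y := by
    refine le_of_tendsto hLs ?_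
    filter_upwards [Ioo_mem_nhdsLT_of_mem (⟨has, le_rfl⟩ : s ∈ Set.Ioc a s)] with u hu
    exact (hlt u hu.1.le hu.2).le
  refine ⟨s, ⟨has, hsb⟩, hLle, ?_⟩
  -- y ≤ h s
  rcases eq_or_lt_of_le hsb with hsb' | hsb'
  · rw [hsb']; exact hyb.le
  · have hsT : s < T := lt_of_lt_of_le hsb' hbT
    have hcw : ContinuousWithinAt h A s :=
      (hc.1 s ⟨le_trans ha hsa, hsT⟩).mono fun u hu => csInf_le hbdd hu
    have hclos : s ∈ closure A := csInf_mem_closure hAne hbdd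
    have hne : (nhdsWithin s A).NeBot := mem_closure_iff_nhdsWithin_neBot.mp hclos
    refine ge_of_tendsto hcw ?_
    filter_upwards [self_mem_nhdsWithin] with u hu
    exact hu.2

lemma crossing_down {h : ℝ → ℝ} {T : ℝ} (hc : CadlagOn h T) {a b y : ℝ}
    (ha : 0 ≤ a) (hbT : b ≤ T) (hab : a ≤ b) (hya : y < h a) (hyb : h b < y) :
    ∃ s ∈ Set.Ioc a b, h s ≤ y ∧ y ≤ Function.leftLim h s := by
  have hab' : a < b := by
    rcases lt_or_eq_of_le hab with h' | h'
    · exact h'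
    · exact absurd (h' ▸ hyb) (not_lt.mpr hya.le)
  set A := {u : ℝ | u ∈ Set.Icc a b ∧ h u ≤ y} with hA
  have hbA : b ∈ A := ⟨⟨hab, le_rfl⟩, hyb.le⟩
  have hAne : A.Nonempty := ⟨b, hbA⟩
  have hbdd : BddBelow A := ⟨a, fun u hu => hu.1.1⟩
  set s := sInf A with hs
  have hsa : a ≤ s := le_csInf hAne fun u hu => hu.1.1
  have hsb : s ≤ b := csInf_le hbdd hbA
  have hlt : ∀ u, a ≤ u → u < s → y < h u := by
    intro u hau hus
    by_contra hcon
    push_neg at hcon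
    exact absurd (csInf_le hbdd ⟨⟨hau, le_trans hus.le hsb⟩, hcon⟩) (not_le.mpr hus)
  have has : a < s := by
    have hcw := hc.1 a ⟨ha, lt_of_lt_of_le hab' hbT⟩
    have hev : ∀ᶠ u in nhdsWithin a (Set.Ici a), y < h u := hcw.eventually_const_lt hya
    obtain ⟨δ, hδ, hball⟩ := Metric.mem_nhdsWithin_iff.mp hev
    have hds : a + δ ≤ s := by
      apply le_csInf hAne
      intro u hu
      by_contra hcon
      push_neg at hcon
      have hmem : u ∈ Metric.ball a δ ∩ Set.Ici a := by
        constructor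
        · rw [Metric.mem_ball, Real.dist_eq, abs_lt]
          constructor
          · linarith [hu.1.1]
          · linarith
        · exact hu.1.1
      exact absurd hu.2 (not_le.mpr (hball hmem))
    linarith
  have hsIoc : s ∈ Set.Ioc (0:ℝ) T := ⟨lt_of_le_of_lt ha has, le_trans hsb hbT⟩
  have hLs := cad_tendsto_leftLim hc hsIoc
  have hLge : y ≤ Function.leftLim h s := by
    refine ge_of_tendsto hLs ?_
    filter_upwards [Ioo_mem_nhdsLT_of_mem (⟨has, le_rfl⟩ : s ∈ Set.Ioc a s)] with u hu
    exact (hlt u hu.1.le hu.2).le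
  refine ⟨s, ⟨has, hsb⟩, ?_, hLge⟩
  rcases eq_or_lt_of_le hsb with hsb' | hsb'
  · rw [hsb']; exact hyb.le
  · have hsT : s < T := lt_of_lt_of_le hsb' hbT
    have hcw : ContinuousWithinAt h A s :=
      (hc.1 s ⟨le_trans ha hsa, hsT⟩).mono fun u hu => csInf_le hbdd hu
    have hclos : s ∈ closure A := csInf_mem_closure hAne hbdd
    have hne : (nhdsWithin s A).NeBot := mem_closure_iff_nhdsWithin_neBot.mp hclos
    refine le_of_tendsto hcw ?_
    filter_upwards [self_mem_nhdsWithin] with u hu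
    exact hu.2

/-- The jump interval of `h` at `s`, with the point `h s` removed. -/
def Kset (h : ℝ → ℝ) (s : ℝ) : Set ℝ :=
  Set.Icc (min (h s) (Function.leftLim h s)) (max (h s) (Function.leftLim h s)) \ {h s}

lemma Kset_empty {h : ℝ → ℝ} {s : ℝ} (hs : h s = Function.leftLim h s) : Kset h s = ∅ := by
  rw [Kset, ← hs, min_self, max_self, Set.Icc_self]
  exact Set.diff_self

-- unified crossing
lemma crossing {h : ℝ → ℝ} {T : ℝ} (hc : CadlagOn h T) {a b y : ℝ}
    (ha : 0 ≤ a) (hbT : b ≤ T) (hab : a ≤ b)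
    (hy : y ∈ Set.Ioo (min (h a) (h b)) (max (h a) (h b))) :
    ∃ s ∈ Set.Ioc a b, s ∈ Set.Ioc (0:ℝ) T ∧ (h s = y ∨ y ∈ Kset h s) := by
  rcases le_total (h a) (h b) with hcmp | hcmp
  · rw [Set.mem_Ioo, min_eq_left hcmp, max_eq_right hcmp] at hy
    obtain ⟨s, hsab, hL, hhs⟩ := crossing_up hc ha hbT hab hy.1 hy.2
    refine ⟨s, hsab, ⟨lt_of_le_of_lt ha hsab.1, le_trans hsab.2 hbT⟩, ?_⟩
    rcases eq_or_lt_of_le hhs with he | hlt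
    · exact Or.inl he.symm
    · refine Or.inr ⟨⟨le_trans (min_le_right _ _) hL, le_trans hhs (le_max_left _ _)⟩, ?_⟩
      exact fun hcon => absurd (Set.mem_singleton_iff.mp hcon) (ne_of_lt hlt)
  · rw [Set.mem_Ioo, min_eq_right hcmp, max_eq_left hcmp] at hy
    obtain ⟨s, hsab, hhs, hL⟩ := crossing_down hc ha hbT hab hy.2 hy.1
    refine ⟨s, hsab, ⟨lt_of_le_of_lt ha hsab.1, le_trans hsab.2 hbT⟩, ?_⟩
    rcases eq_or_lt_of_le hhs with he | hlt
    · exact Or.inl he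
    · refine Or.inr ⟨⟨le_trans (min_le_left _ _) hlt.le, le_trans hL (le_max_right _ _)⟩, ?_⟩
      exact fun hcon => absurd (Set.mem_singleton_iff.mp hcon) (ne_of_gt hlt)

lemma ne_of_mem_Kset {h : ℝ → ℝ} {s y : ℝ} (hy : y ∈ Kset h s) :
    h s ≠ Function.leftLim h s := by
  intro he
  rw [Kset_empty he] at hy
  exact hy

lemma count_le {h : ℝ → ℝ} {T : ℝ} (hc : CadlagOn h T)
    (hinj : Set.InjOn h (Set.Icc 0 T)) {M : ℝ}
    (hM : ∀ t ∈ Set.Icc (0:ℝ) T, |h t| ≤ M)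
    {D : Set ℝ} (hD : ∀ s, s ∈ Set.Ioc (0:ℝ) T → h s ≠ Function.leftLim h s → s ∈ D)
    (n : ℕ) (u : ℕ → ℝ) (hu : Monotone u) (hus : ∀ i, u i ∈ Set.Icc (0:ℝ) T) (y : ℝ) :
    (∑ i ∈ Finset.range n,
      (Set.Ioo (min (h (u i)) (h (u (i+1)))) (max (h (u i)) (h (u (i+1))))).indicator
        (1 : ℝ → ℝ≥0∞) y) ≤
    (Set.Icc (-M) M).indicator (1 : ℝ → ℝ≥0∞) y + ∑' s : D, (Kset h s).indicator (1 : ℝ → ℝ≥0∞) y := by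
  classical
  set S : ℕ → Set ℝ := fun i =>
    Set.Ioo (min (h (u i)) (h (u (i+1)))) (max (h (u i)) (h (u (i+1)))) with hS
  set F : Finset ℕ := (Finset.range n).filter (fun i => y ∈ S i) with hF
  have hLHS : (∑ i ∈ Finset.range n, (S i).indicator (1 : ℝ → ℝ≥0∞) y) = (F.card : ℝ≥0∞) := by
    rw [hF, Finset.card_filter, Nat.cast_sum]
    refine Finset.sum_congr rfl fun i _ => ?_
    by_cases hy : y ∈ S i <;> simp [hy, Set.indicator_apply]
  rw [hLHS]
  rcases Finset.eq_empty_or_nonempty F with hFe | hFne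
  · rw [hFe]; simp
  -- y is in the bounded range
  have hyIcc : (Set.Icc (-M) M).indicator (1 : ℝ → ℝ≥0∞) y = 1 := by
    obtain ⟨i, hi⟩ := hFne
    have hyS : y ∈ S i := (Finset.mem_filter.mp hi).2
    have h1 := abs_le.mp (hM (u i) (hus i))
    have h2 := abs_le.mp (hM (u (i+1)) (hus (i+1)))
    have : y ∈ Set.Icc (-M) M := by
      constructor
      · refine le_trans ?_ hyS.1.le
        simp only [le_min_iff]
        exact ⟨h1.1, h2.1⟩
      · refine le_trans hyS.2.le ?_
        simp only [max_le_iff]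
        exact ⟨h1.2, h2.2⟩
    simp [Set.indicator_of_mem this]
  rw [hyIcc]
  -- witnesses
  have key : ∀ i, i ∈ F → ∃ s, s ∈ Set.Ioc (u i) (u (i+1)) ∧ s ∈ Set.Ioc (0:ℝ) T ∧
      (h s = y ∨ y ∈ Kset h s) := by
    intro i hi
    have hyS : y ∈ S i := (Finset.mem_filter.mp hi).2
    obtain ⟨s, h1, h2, h3⟩ := crossing hc (hus i).1 (hus (i+1)).2 (hu (Nat.le_succ i)) hyS
    exact ⟨s, h1, h2, h3⟩
  choose! w hw1 hw2 hw3 using key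
  have hwmem : ∀ i ∈ F, w i ∈ Set.Icc (0:ℝ) T := fun i hi =>
    ⟨(hw2 i hi).1.le, (hw2 i hi).2⟩
  have hwinj : ∀ i ∈ F, ∀ j ∈ F, w i = w j → i = j := by
    have hmono : ∀ i ∈ F, ∀ j ∈ F, i < j → w i < w j := by
      intro i hi j hj hij
      calc w i ≤ u (i+1) := (hw1 i hi).2
        _ ≤ u j := hu hij
        _ < w j := (hw1 j hj).1
    intro i hi j hj he
    rcases lt_trichotomy i j with hlt | heq | hgt
    · exact absurd he (ne_of_lt (hmono i hi j hj hlt))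
    · exact heq
    · exact absurd he.symm (ne_of_lt (hmono j hj i hi hgt))
  set F1 : Finset ℕ := F.filter (fun i => h (w i) = y) with hF1
  set F2 : Finset ℕ := F.filter (fun i => ¬ h (w i) = y) with hF2
  have hcards : F1.card + F2.card = F.card := Finset.card_filter_add_card_filter_not _
  have hcard1 : F1.card ≤ 1 := by
    rw [Finset.card_le_one]
    intro i hi j hj
    have hi' := Finset.mem_filter.mp hi
    have hj' := Finset.mem_filter.mp hj
    have : h (w i) = h (w j) := by rw [hi'.2, hj'.2]
    exact hwinj i hi'.1 j hj'.1 (hinj (hwmem i hi'.1) (hwmem j hj'.1) this)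
  have hcard2 : (F2.card : ℝ≥0∞) ≤ ∑' s : D, (Kset h s).indicator (1 : ℝ → ℝ≥0∞) y := by
    have hmemD : ∀ i (hi : i ∈ F2), w i ∈ D := by
      intro i hi
      have hi' := Finset.mem_filter.mp hi
      have hK : y ∈ Kset h (w i) := (hw3 i hi'.1).resolve_left hi'.2
      exact hD (w i) (hw2 i hi'.1) (ne_of_mem_Kset hK)
    set G : Finset D := F2.attach.image (fun i => (⟨w i.1, hmemD i.1 i.2⟩ : D)) with hG
    have hinjG : Function.Injective (fun i : {x // x ∈ F2} => (⟨w i.1, hmemD i.1 i.2⟩ : D)) := by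
      intro i j hij
      have : w i.1 = w j.1 := congrArg Subtype.val hij
      exact Subtype.ext (hwinj i.1 (Finset.mem_of_mem_filter _ i.2) j.1
        (Finset.mem_of_mem_filter _ j.2) this)
    have hGcard : G.card = F2.card := by
      rw [hG, Finset.card_image_of_injective _ hinjG, Finset.card_attach]
    have hGval : ∀ s ∈ G, (Kset h (s : ℝ)).indicator (1 : ℝ → ℝ≥0∞) y = 1 := by
      intro s hs
      obtain ⟨i, _, hi2⟩ := Finset.mem_image.mp hs
      have hi' := Finset.mem_filter.mp i.2
      have hK : y ∈ Kset h (w i.1) := (hw3 i.1 hi'.1).resolve_left hi'.2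
      rw [← hi2]
      exact Set.indicator_of_mem hK _
    calc (F2.card : ℝ≥0∞) = ∑ s ∈ G, (Kset h (s : ℝ)).indicator (1 : ℝ → ℝ≥0∞) y := by
          rw [Finset.sum_congr rfl hGval, Finset.sum_const, hGcard]
          simp
      _ ≤ ∑' s : D, (Kset h (s : ℝ)).indicator (1 : ℝ → ℝ≥0∞) y := ENNReal.sum_le_tsum G
  calc (F.card : ℝ≥0∞) = (F1.card : ℝ≥0∞) + (F2.card : ℝ≥0∞) := by
        rw [← Nat.cast_add, hcards]
    _ ≤ 1 + ∑' s : D, (Kset h (s : ℝ)).indicator (1 : ℝ → ℝ≥0∞) y := by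
        gcongr
        exact_mod_cast hcard1

open MeasureTheory in
lemma partition_sum_le {h : ℝ → ℝ} {T : ℝ} (hc : CadlagOn h T)
    (hinj : Set.InjOn h (Set.Icc 0 T)) {M : ℝ}
    (hM : ∀ t ∈ Set.Icc (0:ℝ) T, |h t| ≤ M)
    {D : Set ℝ} (hDc : D.Countable)
    (hD : ∀ s, s ∈ Set.Ioc (0:ℝ) T → h s ≠ Function.leftLim h s → s ∈ D)
    (n : ℕ) (u : ℕ → ℝ) (hu : Monotone u) (hus : ∀ i, u i ∈ Set.Icc (0:ℝ) T) :
    (∑ i ∈ Finset.range n, edist (h (u (i+1))) (h (u i))) ≤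
      volume (Set.Icc (-M) M) + ∑' s : D, volume (Kset h (s : ℝ)) := by
  haveI := hDc.to_subtype
  set S : ℕ → Set ℝ := fun i =>
    Set.Ioo (min (h (u i)) (h (u (i+1)))) (max (h (u i)) (h (u (i+1))))
  have hSmeas : ∀ i, MeasurableSet (S i) := fun i => measurableSet_Ioo
  have hKmeas : ∀ s : ℝ, MeasurableSet (Kset h s) := fun s =>
    measurableSet_Icc.diff (measurableSet_singleton _)
  have hedist : ∀ i, edist (h (u (i+1))) (h (u i)) = volume (S i) := by
    intro i
    rw [edist_dist, Real.dist_eq, Real.volume_Ioo, max_sub_min_eq_abs, abs_sub_comm]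
  calc (∑ i ∈ Finset.range n, edist (h (u (i+1))) (h (u i)))
      = ∑ i ∈ Finset.range n, volume (S i) := Finset.sum_congr rfl fun i _ => hedist i
    _ = ∑ i ∈ Finset.range n, ∫⁻ y, (S i).indicator (1 : ℝ → ℝ≥0∞) y := by
        refine Finset.sum_congr rfl fun i _ => ?_
        rw [lintegral_indicator_one (hSmeas i)]
    _ = ∫⁻ y, ∑ i ∈ Finset.range n, (S i).indicator (1 : ℝ → ℝ≥0∞) y := by
        rw [lintegral_finset_sum]
        exact fun i _ => (measurable_one.indicator (hSmeas i))
    _ ≤ ∫⁻ y, ((Set.Icc (-M) M).indicator (1 : ℝ → ℝ≥0∞) y +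
          ∑' s : D, (Kset h (s : ℝ)).indicator (1 : ℝ → ℝ≥0∞) y) := by
        refine lintegral_mono fun y => ?_
        exact count_le hc hinj hM hD n u hu hus y
    _ = (∫⁻ y, (Set.Icc (-M) M).indicator (1 : ℝ → ℝ≥0∞) y) +
          ∫⁻ y, ∑' s : D, (Kset h (s : ℝ)).indicator (1 : ℝ → ℝ≥0∞) y := by
        rw [lintegral_add_left (measurable_one.indicator measurableSet_Icc)]
    _ = volume (Set.Icc (-M) M) + ∑' s : D, volume (Kset h (s : ℝ)) := by
        rw [lintegral_indicator_one measurableSet_Icc, lintegral_tsum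
          (fun s : D => (measurable_one.indicator (hKmeas (s : ℝ))).aemeasurable)]
        congr 1
        exact tsum_congr fun s => lintegral_indicator_one (hKmeas (s : ℝ))

open MeasureTheory in
lemma reverse_dir {h : ℝ → ℝ} {T : ℝ} (hT : 0 < T) (hc : CadlagOn h T)
    (hinj : Set.InjOn h (Set.Icc 0 T))
    (hsum : Summable (fun s : Set.Ioc (0:ℝ) T => |h s - Function.leftLim h s|)) :
    BoundedVariationOn h (Set.Icc 0 T) := by
  obtain ⟨M, hM⟩ := cad_bounded hT hc
  set D : Set ℝ := {s : ℝ | s ∈ Set.Ioc (0:ℝ) T ∧ h s ≠ Function.leftLim h s} with hDdef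
  have hDc : D.Countable := by
    have h1 : (Function.support (fun s : Set.Ioc (0:ℝ) T =>
        |h s - Function.leftLim h s|)).Countable := hsum.countable_support
    have h2 : D = Subtype.val '' (Function.support (fun s : Set.Ioc (0:ℝ) T =>
        |h s - Function.leftLim h s|)) := by
      ext s
      constructor
      · rintro ⟨hs1, hs2⟩
        exact ⟨⟨s, hs1⟩, by simpa [Function.mem_support, sub_ne_zero] using hs2, rfl⟩
      · rintro ⟨⟨t, ht⟩, hts, rfl⟩
        refine ⟨ht, ?_⟩
        simpa [Function.mem_support, sub_ne_zero] using hts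
    rw [h2]
    exact h1.image _
  have hD : ∀ s, s ∈ Set.Ioc (0:ℝ) T → h s ≠ Function.leftLim h s → s ∈ D :=
    fun s h1 h2 => ⟨h1, h2⟩
  have hB : eVariationOn h (Set.Icc 0 T) ≤
      volume (Set.Icc (-M) M) + ∑' s : D, volume (Kset h (s : ℝ)) := by
    rw [eVariationOn]
    refine iSup_le fun p => ?_
    exact partition_sum_le hc hinj hM hDc hD p.1 p.2.1 p.2.2.1 p.2.2.2
  have hvol : ∀ s : ℝ, volume (Kset h s) = ENNReal.ofReal |h s - Function.leftLim h s| := by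
    intro s
    rw [Kset, measure_diff_null (Real.volume_singleton), Real.volume_Icc, max_sub_min_eq_abs,
      abs_sub_comm]
  have hfin : volume (Set.Icc (-M) M) + ∑' s : D, volume (Kset h (s : ℝ)) ≠ ⊤ := by
    apply ENNReal.add_ne_top.mpr
    constructor
    · rw [Real.volume_Icc]; exact ENNReal.ofReal_ne_top
    · have hle : (∑' s : D, volume (Kset h (s : ℝ))) ≤
          ∑' s : Set.Ioc (0:ℝ) T, ENNReal.ofReal |h s - Function.leftLim h s| := by
        have hinj2 : Function.Injective (fun s : D => (⟨s.1, s.2.1⟩ : Set.Ioc (0:ℝ) T)) := by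
          intro a b hab
          exact Subtype.ext (congrArg Subtype.val hab :)
        refine le_trans (le_of_eq ?_)
          (ENNReal.tsum_comp_le_tsum_of_injective hinj2
            (fun t : Set.Ioc (0:ℝ) T => ENNReal.ofReal |h t - Function.leftLim h t|))
        exact tsum_congr fun s => hvol (s : ℝ)
      refine ne_top_of_le_ne_top ?_ hle
      rw [← ENNReal.ofReal_tsum_of_nonneg (fun s => abs_nonneg _) hsum]
      exact ENNReal.ofReal_ne_top
  exact fun htop => hfin (top_le_iff.mp (htop ▸ hB))

theorem stmt3 (T : ℝ) (hT : 0 < T) (h : ℝ → ℝ) (hc : CadlagOn h T)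
    (hinj : Set.InjOn h (Set.Icc 0 T)) :
    BoundedVariationOn h (Set.Icc 0 T) ↔
      Summable (fun s : Set.Ioc (0:ℝ) T => |h s - Function.leftLim h s|) :=
  ⟨forward_dir hT hc, reverse_dir hT hc hinj⟩
end

section
/- Let a < c, let f : [a,c) → ℝ be continuous with f(a) = lim_{t→c⁻} f(t), and let b ∈ [a,c) with f(a) ≠ f(b). Let g : [a,c) → ℝ be a càdlàg pure-jump function, i.e., g(x) = ∑_{a ≤ s ≤ x} (g(s) - g(s-)) for all x. If ∑_{a ≤ s < c} |Δg(s)| < (1/2)·|f(a) - f(b)|, then f + g is not injective on [a,c). -/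
set_option maxHeartbeats 1000000

open Filter Set Function MeasureTheory Topology


lemma cross (φ : ℝ → ℝ) (p q y : ℝ) (hpq : p ≤ q)
    (hrc : ∀ t ∈ Set.Icc p q, Filter.Tendsto φ (nhdsWithin t (Set.Ici t)) (nhds (φ t)))
    (hll : ∀ t ∈ Set.Ioc p q, Filter.Tendsto φ (nhdsWithin t (Set.Iio t)) (nhds (Function.leftLim φ t)))
    (hyq : φ q ≤ y) (hyp : y ≤ φ p)
    (hgood : ∀ s ∈ Set.Ioc p q, φ s ≠ Function.leftLim φ s → y ∉ Set.uIcc (Function.leftLim φ s) (φ s)) :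
    ∃ u ∈ Set.Icc p q, φ u = y := by
  set A := {t | t ∈ Set.Icc p q ∧ φ t ≤ y} with hA
  have hqA : q ∈ A := ⟨⟨hpq, le_refl q⟩, hyq⟩
  have hne : A.Nonempty := ⟨q, hqA⟩
  have hbdd : BddBelow A := ⟨p, fun t ht => ht.1.1⟩
  set u := sInf A with hu
  have hup : p ≤ u := le_csInf hne (fun t ht => ht.1.1)
  have huq : u ≤ q := csInf_le hbdd hqA
  have huIcc : u ∈ Set.Icc p q := ⟨hup, huq⟩
  refine ⟨u, huIcc, ?_⟩
  have hfreq : ∃ᶠ t in 𝓝[≥] u, φ t ≤ y := by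
    rw [Filter.frequently_iff]
    intro U hU
    rcases Metric.mem_nhdsWithin_iff.1 hU with ⟨ε, hε, hsub⟩
    obtain ⟨t, htA, htlt⟩ := exists_lt_of_csInf_lt hne (by linarith : sInf A < u + ε)
    have htu : u ≤ t := csInf_le hbdd htA
    refine ⟨t, hsub ⟨?_, htu⟩, htA.2⟩
    rw [Metric.mem_ball, Real.dist_eq, abs_of_nonneg (by linarith)]
    linarith
  have hle : φ u ≤ y := by
    by_contra hgt
    push_neg at hgt
    have hev : ∀ᶠ t in 𝓝[≥] u, φ t ∈ Set.Ioi y := (hrc u huIcc) (Ioi_mem_nhds hgt)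
    obtain ⟨t, h1, h2⟩ := (hev.and_frequently hfreq).exists
    exact absurd h2 (not_le.2 h1)
  rcases eq_or_lt_of_le hle with heq | hlt
  · exact heq
  exfalso
  have hpu : p < u := by
    rcases eq_or_lt_of_le hup with h | h
    · exact absurd (h ▸ hyp) (not_le.2 hlt)
    · exact h
  have huIoc : u ∈ Set.Ioc p q := ⟨hpu, huq⟩
  have hlower : ∀ᶠ t in 𝓝[<] u, y ≤ φ t := by
    filter_upwards [Ioo_mem_nhdsLT_of_mem (⟨hpu, le_refl u⟩ : u ∈ Set.Ioc p u)] with t ht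
    by_contra hcon
    push_neg at hcon
    have htA : t ∈ A := ⟨⟨le_of_lt ht.1, le_trans (le_of_lt ht.2) huq⟩, le_of_lt hcon⟩
    exact absurd (csInf_le hbdd htA) (not_le.2 ht.2)
  have hyL : y ≤ Function.leftLim φ u := ge_of_tendsto (hll u huIoc) hlower
  have hneq : φ u ≠ Function.leftLim φ u := by intro h; rw [← h] at hyL; linarith
  exact hgood u huIoc hneq (Set.mem_uIcc.2 (Or.inr ⟨le_of_lt hlt, hyL⟩))

/-- The jump of `g` at `s`, with the convention `g(a-) := 0`, so the jump
at `a` is `g a` itself. -/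
noncomputable def jumpAt (g : ℝ → ℝ) (a s : ℝ) : ℝ :=
  if s = a then g a else g s - Function.leftLim g s

lemma key (a b c : ℝ) (hac : a < c) (hb : b ∈ Set.Ico a c)
    (f g : ℝ → ℝ)
    (hf : ContinuousOn f (Set.Ico a c))
    (hflim : Filter.Tendsto f (nhdsWithin c (Set.Iio c)) (nhds (f a)))
    (hgrc : ∀ t ∈ Set.Ico a c, ContinuousWithinAt g (Set.Ici t) t)
    (hgll : ∀ t ∈ Set.Ioc a c, ∃ L : ℝ, Filter.Tendsto g (nhdsWithin t (Set.Iio t)) (nhds L))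
    (hsum : Summable (fun s : Set.Ico a c => |jumpAt g a s|))
    (hpure : ∀ x ∈ Set.Ico a c, g x = ∑' s : Set.Icc a x, jumpAt g a s)
    (hlt : f b < f a)
    (hsmall : (∑' s : Set.Ico a c, |jumpAt g a s|) < (1/2) * (f a - f b)) :
    ¬ Set.InjOn (fun t => f t + g t) (Set.Ico a c) := by
  intro hinj
  set J : ℝ → ℝ := jumpAt g a with hJ
  set G := f a - f b with hG
  have hG0 : 0 < G := sub_pos.2 hlt
  have hab : a < b := by
    rcases eq_or_lt_of_le hb.1 with h | h
    · rw [← h] at hlt; exact absurd rfl (ne_of_gt hlt)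
    · exact h
  have hbc : b < c := hb.2
  set S := ∑' s : Set.Ico a c, |J s| with hS
  have hSG : S < (1/2) * G := hsmall
  -- indicator setup
  set Jind : ℝ → ℝ := (Set.Ico a c).indicator J with hJind
  have habs : ∀ x, (Set.Ico a c).indicator (fun s => |J s|) x = |Jind x| := by
    intro x; by_cases hx : x ∈ Set.Ico a c <;> simp [hJind, hx]
  have hsumAbs : Summable (fun x => |Jind x|) := by
    have h1 : Summable ((fun s => |J s|) ∘ (Subtype.val : Set.Ico a c → ℝ)) := hsum
    exact (summable_subtype_iff_indicator.1 h1).congr habs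
  have hsumInd : Summable Jind := Summable.of_abs hsumAbs
  have hS_eq : S = ∑' x : ℝ, |Jind x| := by
    have h1 := tsum_subtype (Set.Ico a c) (fun s => |J s|)
    rw [hS]
    exact h1.trans (tsum_congr habs)
  have hS0 : 0 ≤ S := by
    rw [hS_eq]; exact tsum_nonneg (fun x => abs_nonneg _)
  -- g values as indicator sums
  have hgval : ∀ x ∈ Set.Ico a c, g x = ∑' t : ℝ, (Set.Icc a x).indicator J t := by
    intro x hx
    rw [hpure x hx]
    exact tsum_subtype (Set.Icc a x) J
  have hsub_ind : ∀ (s : Set ℝ), s ⊆ Set.Ico a c → s.indicator J = s.indicator Jind := by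
    intro s hs; funext t; by_cases ht : t ∈ s
    · simp [Set.indicator_of_mem, ht, hJind, hs ht]
    · simp [Set.indicator_of_notMem, ht]
  have hsummable_on : ∀ (s : Set ℝ), s ⊆ Set.Ico a c → Summable (s.indicator J) := by
    intro s hs; rw [hsub_ind s hs]; exact hsumInd.indicator s
  -- difference formula
  have hdiff : ∀ x' x : ℝ, a ≤ x' → x' ≤ x → x < c →
      g x - g x' = ∑' t : ℝ, (Set.Ioc x' x).indicator J t := by
    intro x' x h1 h2 h3
    have hx : x ∈ Set.Ico a c := ⟨le_trans h1 h2, h3⟩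
    have hx' : x' ∈ Set.Ico a c := ⟨h1, lt_of_le_of_lt h2 h3⟩
    have hsx : Set.Icc a x ⊆ Set.Ico a c := fun t ht => ⟨ht.1, lt_of_le_of_lt ht.2 h3⟩
    have hsx' : Set.Icc a x' ⊆ Set.Ico a c := fun t ht => ⟨ht.1, lt_of_le_of_lt ht.2 hx'.2⟩
    rw [hgval x hx, hgval x' hx', ← Summable.tsum_sub (hsummable_on _ hsx) (hsummable_on _ hsx')]
    refine tsum_congr (fun t => ?_)
    by_cases h4 : t ∈ Set.Icc a x'
    · have h5 : t ∈ Set.Icc a x := ⟨h4.1, le_trans h4.2 h2⟩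
      have h6 : t ∉ Set.Ioc x' x := fun hc => absurd h4.2 (not_le.2 hc.1)
      simp [Set.indicator_of_mem, h4, h5, Set.indicator_of_notMem, h6]
    · by_cases h5 : t ∈ Set.Icc a x
      · have h6 : t ∈ Set.Ioc x' x := by
          constructor
          · by_contra hc; push_neg at hc; exact h4 ⟨h5.1, hc⟩
          · exact h5.2
        simp [Set.indicator_of_mem, h5, h6, Set.indicator_of_notMem, h4]
      · have h6 : t ∉ Set.Ioc x' x := by
          intro hc; exact h5 ⟨le_trans h1 (le_of_lt hc.1), hc.2⟩
        simp [Set.indicator_of_notMem, h4, h5, h6]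
  have hbound : ∀ x' x : ℝ, a ≤ x' → x' ≤ x → x < c → |g x - g x'| ≤ S := by
    intro x' x h1 h2 h3
    rw [hdiff x' x h1 h2 h3]
    have hsubset : Set.Ioc x' x ⊆ Set.Ico a c :=
      fun t ht => ⟨le_trans h1 (le_of_lt ht.1), lt_of_le_of_lt ht.2 h3⟩
    have habs2 : ∀ t, |(Set.Ioc x' x).indicator J t| = (Set.Ioc x' x).indicator (fun u => |Jind u|) t := by
      intro t; by_cases ht : t ∈ Set.Ioc x' x
      · simp [Set.indicator_of_mem, ht, hJind, hsubset ht]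
      · simp [Set.indicator_of_notMem, ht]
    have hsum2 : Summable (fun t => |(Set.Ioc x' x).indicator J t|) := by
      refine Summable.congr (hsumAbs.indicator (Set.Ioc x' x)) (fun t => (habs2 t).symm)
    calc |∑' t : ℝ, (Set.Ioc x' x).indicator J t|
        ≤ ∑' t : ℝ, |(Set.Ioc x' x).indicator J t| := by
          have h7 := norm_tsum_le_tsum_norm (f := fun t => (Set.Ioc x' x).indicator J t)
            (by simpa [Real.norm_eq_abs] using hsum2)
          simpa [Real.norm_eq_abs] using h7
      _ ≤ ∑' t : ℝ, |Jind t| := by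
          refine Summable.tsum_le_tsum (fun t => ?_) hsum2 hsumAbs
          rw [habs2]
          by_cases ht : t ∈ Set.Ioc x' x
          · simp [Set.indicator_of_mem, ht]
          · simp [Set.indicator_of_notMem, ht, abs_nonneg]
      _ = S := hS_eq.symm
  set h : ℝ → ℝ := fun t => f t + g t with hh
  -- right continuity of h
  have hfr : ∀ t ∈ Set.Ico a c, Tendsto f (nhdsWithin t (Set.Ici t)) (nhds (f t)) := by
    intro t ht
    refine (hf t ht).mono_of_mem_nhdsWithin (mem_nhdsWithin.2 ⟨Set.Iio c, isOpen_Iio, ht.2, ?_⟩)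
    intro x hx; exact ⟨le_trans ht.1 hx.2, hx.1⟩
  have hhr : ∀ t ∈ Set.Ico a c, Tendsto h (nhdsWithin t (Set.Ici t)) (nhds (h t)) :=
    fun t ht => (hfr t ht).add (hgrc t ht)
  -- left limits of h
  have hfl : ∀ t ∈ Set.Ioo a c, Tendsto f (nhdsWithin t (Set.Iio t)) (nhds (f t)) := by
    intro t ht
    refine (hf t ⟨le_of_lt ht.1, ht.2⟩).mono_of_mem_nhdsWithin
      (mem_nhdsWithin.2 ⟨Set.Ioo a c, isOpen_Ioo, ht, ?_⟩)
    intro x hx; exact ⟨le_of_lt hx.1.1, hx.1.2⟩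
  have hnb : ∀ t : ℝ, nhdsWithin t (Set.Iio t) ≠ ⊥ :=
    fun t => (inferInstance : (nhdsWithin t (Set.Iio t)).NeBot).ne'
  have hgl : ∀ t ∈ Set.Ioo a c, Tendsto g (nhdsWithin t (Set.Iio t)) (nhds (Function.leftLim g t)) := by
    intro t ht
    obtain ⟨L, hL⟩ := hgll t ⟨ht.1, le_of_lt ht.2⟩
    rwa [leftLim_eq_of_tendsto hL]
  have hhl : ∀ t ∈ Set.Ioo a c,
      Tendsto h (nhdsWithin t (Set.Iio t)) (nhds (f t + Function.leftLim g t)) :=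
    fun t ht => (hfl t ht).add (hgl t ht)
  have hhleft : ∀ t ∈ Set.Ioo a c, Function.leftLim h t = f t + Function.leftLim g t :=
    fun t ht => leftLim_eq_of_tendsto (hhl t ht)
  have hjumpEq : ∀ t ∈ Set.Ioo a c, h t - Function.leftLim h t = J t := by
    intro t ht
    rw [hhleft t ht, hJ]
    show f t + g t - (f t + Function.leftLim g t) = jumpAt g a t
    rw [jumpAt, if_neg (ne_of_gt ht.1)]
    ring
  -- countable support
  have hcnt : (Function.support Jind).Countable := by
    have h1 : Summable (fun x => ‖Jind x‖₊) := by
      apply NNReal.summable_coe.1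
      simpa [Real.norm_eq_abs] using hsumAbs
    have h2 := Summable.countable_support_nnreal _ h1
    refine Set.Countable.mono ?_ h2
    intro x hx
    simp only [Function.mem_support] at hx ⊢
    simpa using hx
  -- choice of t₀
  set ε := (G - 2*S)/2 with hε
  have hε0 : 0 < ε := by rw [hε]; linarith
  have hev : ∀ᶠ t in nhdsWithin c (Set.Iio c), |f t - f a| < ε := by
    have h1 := hflim (Metric.ball_mem_nhds (f a) hε0)
    filter_upwards [h1] with t ht
    simpa [Metric.mem_ball, Real.dist_eq] using ht
  have hIoobc : Set.Ioo b c ∈ nhdsWithin c (Set.Iio c) :=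
    Ioo_mem_nhdsLT_of_mem (⟨hbc, le_refl c⟩ : c ∈ Set.Ioc b c)
  obtain ⟨t₀, hft₀, ht₀⟩ := (hev.and (eventually_of_mem hIoobc (fun x hx => hx))).exists
  -- numeric bounds
  have hgb : |g b - g a| ≤ S := hbound a b (le_refl a) hb.1 hbc
  have hgt₀ : |g t₀ - g b| ≤ S := hbound b t₀ hb.1 (le_of_lt ht₀.1) ht₀.2
  have h1 : h b + G/2 ≤ h a := by
    have := abs_le.1 hgb
    show f b + g b + G/2 ≤ f a + g a
    rw [hG] at hSG ⊢
    linarith [this.1, this.2]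
  have h2 : h b + G/2 < h t₀ := by
    have h3 := abs_le.1 hgt₀
    have h4 := abs_lt.1 hft₀
    show f b + g b + G/2 < f t₀ + g t₀
    rw [hG] at hSG ⊢
    rw [hε, hG] at h4
    linarith [h3.1, h3.2, h4.1, h4.2]
  -- bad set
  set T := {s : ℝ | s ∈ Set.Ioc a t₀ ∧ J s ≠ 0} with hT
  have hTIoo : ∀ s ∈ T, s ∈ Set.Ioo a c := fun s hs => ⟨hs.1.1, lt_of_le_of_lt hs.1.2 ht₀.2⟩
  have hTcnt : T.Countable := by
    refine Set.Countable.mono ?_ hcnt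
    intro s hs
    have hsm : s ∈ Set.Ico a c := ⟨le_of_lt (hTIoo s hs).1, (hTIoo s hs).2⟩
    simp only [Function.mem_support, hJind]
    rw [Set.indicator_of_mem hsm]
    exact hs.2
  set B := ⋃ s ∈ T, Set.uIcc (Function.leftLim h s) (h s) with hB
  have hvolB : volume B ≤ ENNReal.ofReal S := by
    calc volume B ≤ ∑' s : T, volume (Set.uIcc (Function.leftLim h (s:ℝ)) (h s)) :=
          measure_biUnion_le volume hTcnt _
      _ = ∑' s : T, ENNReal.ofReal |Jind (s:ℝ)| := by
          refine tsum_congr (fun s => ?_)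
          rw [Real.volume_interval]
          congr 1
          have hsIoo : (s:ℝ) ∈ Set.Ioo a c := hTIoo s s.2
          have hsm : (s:ℝ) ∈ Set.Ico a c := ⟨le_of_lt hsIoo.1, hsIoo.2⟩
          rw [hjumpEq s hsIoo, hJind, Set.indicator_of_mem hsm]
      _ = ∑' s : ℝ, T.indicator (fun u => ENNReal.ofReal |Jind u|) s :=
          tsum_subtype T (fun u => ENNReal.ofReal |Jind u|)
      _ ≤ ∑' s : ℝ, ENNReal.ofReal |Jind s| :=
          ENNReal.tsum_le_tsum (fun s => Set.indicator_le_self T _ s)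
      _ = ENNReal.ofReal (∑' s : ℝ, |Jind s|) :=
          (ENNReal.ofReal_tsum_of_nonneg (fun s => abs_nonneg _) hsumAbs).symm
      _ = ENNReal.ofReal S := by rw [hS_eq]
  -- choose y
  obtain ⟨y, hyI, hyB⟩ : ∃ y ∈ Set.Ioo (h b) (h b + G/2), y ∉ B := by
    by_contra hcon
    push_neg at hcon
    have hsub : Set.Ioo (h b) (h b + G/2) ⊆ B := hcon
    have hm := (measure_mono hsub).trans hvolB
    rw [Real.volume_Ioo] at hm
    have : h b + G/2 - h b ≤ S := by
      rw [ENNReal.ofReal_le_ofReal_iff hS0] at hm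
      exact hm
    linarith
  -- cross on [a,b]
  obtain ⟨u, huIcc, hu⟩ := cross h a b y hb.1
    (fun t ht => hhr t ⟨ht.1, lt_of_le_of_lt ht.2 hbc⟩)
    (fun t ht => by
      have htIoo : t ∈ Set.Ioo a c := ⟨ht.1, lt_of_le_of_lt ht.2 hbc⟩
      rw [hhleft t htIoo]; exact hhl t htIoo)
    (le_of_lt hyI.1) (le_of_lt (lt_of_lt_of_le hyI.2 h1))
    (fun s hs hne => by
      have hsIoo : s ∈ Set.Ioo a c := ⟨hs.1, lt_of_le_of_lt hs.2 hbc⟩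
      have hsT : s ∈ T := by
        refine ⟨⟨hs.1, le_trans hs.2 (le_of_lt ht₀.1)⟩, ?_⟩
        rw [← hjumpEq s hsIoo]
        exact sub_ne_zero.2 hne
      intro hyIn
      exact hyB (Set.mem_biUnion hsT hyIn))
  -- cross on [b,t₀] for -h
  have hnegleft : ∀ t ∈ Set.Ioo a c, Function.leftLim (fun x => -h x) t = -(Function.leftLim h t) := by
    intro t ht
    refine leftLim_eq_of_tendsto ?_
    have := (hhl t ht).neg
    rw [hhleft t ht]
    exact this
  obtain ⟨v, hvIcc, hv⟩ := cross (fun x => -h x) b t₀ (-y) (le_of_lt ht₀.1)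
    (fun t ht => by
      have htm : t ∈ Set.Ico a c := ⟨le_trans hb.1 ht.1, lt_of_le_of_lt ht.2 ht₀.2⟩
      exact (hhr t htm).neg)
    (fun t ht => by
      have htIoo : t ∈ Set.Ioo a c := ⟨lt_trans hab ht.1, lt_of_le_of_lt ht.2 ht₀.2⟩
      rw [hnegleft t htIoo, hhleft t htIoo]
      exact (hhl t htIoo).neg)
    (by
      show -h t₀ ≤ -y
      have : y ≤ h t₀ := le_of_lt (lt_trans hyI.2 h2)
      linarith)
    (by
      show -y ≤ -h b
      have : h b ≤ y := le_of_lt hyI.1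
      linarith)
    (fun s hs hne => by
      have hsIoo : s ∈ Set.Ioo a c := ⟨lt_trans hab hs.1, lt_of_le_of_lt hs.2 ht₀.2⟩
      have hne' : h s ≠ Function.leftLim h s := by
        rw [hnegleft s hsIoo] at hne
        intro hz
        apply hne
        show -h s = -(Function.leftLim h s)
        rw [hz]
      have hsT : s ∈ T := by
        refine ⟨⟨lt_trans hab hs.1, hs.2⟩, ?_⟩
        rw [← hjumpEq s hsIoo]
        exact sub_ne_zero.2 hne'
      intro hyIn
      have hyIn' : -y ∈ Set.uIcc (-(Function.leftLim h s)) (-(h s)) := by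
        rw [hnegleft s hsIoo] at hyIn
        exact hyIn
      refine hyB (Set.mem_biUnion hsT ?_)
      rcases Set.mem_uIcc.1 hyIn' with ⟨ha1, ha2⟩ | ⟨ha1, ha2⟩
      · exact Set.mem_uIcc.2 (Or.inr ⟨by linarith, by linarith⟩)
      · exact Set.mem_uIcc.2 (Or.inl ⟨by linarith, by linarith⟩))
  have humem : u ∈ Set.Ico a c := ⟨huIcc.1, lt_of_le_of_lt huIcc.2 hbc⟩
  have hvmem : v ∈ Set.Ico a c := ⟨le_trans hb.1 hvIcc.1, lt_of_le_of_lt hvIcc.2 ht₀.2⟩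
  have hv' : h v = y := neg_inj.1 hv
  have huv : u = v := hinj humem hvmem (hu.trans hv'.symm)
  have hub : u = b := le_antisymm huIcc.2 (huv ▸ hvIcc.1)
  rw [hub] at hu
  exact absurd hu (ne_of_lt hyI.1)


theorem stmt5 (a b c : ℝ) (hac : a < c) (hb : b ∈ Set.Ico a c)
    (f g : ℝ → ℝ)
    (hf : ContinuousOn f (Set.Ico a c))
    (hflim : Filter.Tendsto f (nhdsWithin c (Set.Iio c)) (nhds (f a)))
    (hfab : f a ≠ f b)
    (hgrc : ∀ t ∈ Set.Ico a c, ContinuousWithinAt g (Set.Ici t) t)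
    (hgll : ∀ t ∈ Set.Ioc a c, ∃ L : ℝ, Filter.Tendsto g (nhdsWithin t (Set.Iio t)) (nhds L))
    (hsum : Summable (fun s : Set.Ico a c => |jumpAt g a s|))
    (hpure : ∀ x ∈ Set.Ico a c, g x = ∑' s : Set.Icc a x, jumpAt g a s)
    (hsmall : (∑' s : Set.Ico a c, |jumpAt g a s|) < (1/2) * |f a - f b|) :
    ¬ Set.InjOn (fun t => f t + g t) (Set.Ico a c) := by
  have hnb : ∀ t : ℝ, nhdsWithin t (Set.Iio t) ≠ ⊥ :=
    fun t => (inferInstance : (nhdsWithin t (Set.Iio t)).NeBot).ne'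
  rcases hfab.lt_or_gt with hlt | hlt
  · -- f a < f b : apply key to -f, -g
    have hjneg : ∀ s ∈ Set.Ico a c, jumpAt (-g) a s = - jumpAt g a s := by
      intro s hs
      by_cases hsa : s = a
      · subst hsa; simp [jumpAt]
      · have hsIoc : s ∈ Set.Ioc a c := ⟨lt_of_le_of_ne hs.1 (Ne.symm hsa), le_of_lt hs.2⟩
        obtain ⟨L, hL⟩ := hgll s hsIoc
        have h1 : Function.leftLim g s = L := leftLim_eq_of_tendsto hL
        have h2 : Function.leftLim (-g) s = -L := by
          refine leftLim_eq_of_tendsto ?_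
          exact hL.neg
        rw [jumpAt, jumpAt, if_neg hsa, if_neg hsa, h1, h2]
        show -g s - -L = -(g s - L)
        ring
    intro hinj
    have key' := key a b c hac hb (-f) (-g) hf.neg hflim.neg
      (fun t ht => (hgrc t ht).neg)
      (fun t ht => by obtain ⟨L, hL⟩ := hgll t ht; exact ⟨-L, hL.neg⟩)
      (by
        refine hsum.congr (fun s => ?_)
        rw [hjneg s s.2, abs_neg])
      (by
        intro x hx
        have hIcc : Set.Icc a x ⊆ Set.Ico a c := fun t ht => ⟨ht.1, lt_of_le_of_lt ht.2 hx.2⟩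
        have h3 : ∑' s : Set.Icc a x, jumpAt (-g) a s = ∑' s : Set.Icc a x, -(jumpAt g a s) :=
          tsum_congr (fun s => hjneg s (hIcc s.2))
        rw [h3, tsum_neg, ← hpure x hx]
        rfl)
      (by
        show -f b < -f a
        linarith)
      (by
        have h4 : ∑' s : Set.Ico a c, |jumpAt (-g) a s| = ∑' s : Set.Ico a c, |jumpAt g a s| :=
          tsum_congr (fun s => by rw [hjneg s s.2, abs_neg])
        have h5 : |f a - f b| = -f a - -f b := by
          rw [abs_of_neg (by linarith : f a - f b < 0)]; ring
        simp only [Pi.neg_apply]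
        rw [h4, ← h5]
        exact hsmall)
    apply key'
    intro x hx y hy hxy
    apply hinj hx hy
    have : -f x + -g x = -f y + -g y := hxy
    show f x + g x = f y + g y
    linarith
  · have h5 : |f a - f b| = f a - f b := abs_of_pos (by linarith)
    exact key a b c hac hb f g hf hflim hgrc hgll hsum hpure hlt (h5 ▸ hsmall)
end

section
/- A family of functions (X^x)_{x∈ℝ}, X^x : [0,∞) → ℝ, satisfying X^x(0) = x for all x, is time-homogeneous Markov (i.e., X^x(s) = X^y(t) implies X^x(s+h) = X^y(t+h) for all h ≥ 0) and each path is càdlàg of locally bounded variation if and only if each path is càdlàg and the jumps of every path are locally absolutely summable (∑_{0 < s ≤ T} |X^x(s) - X^x(s-)| < ∞ for every T > 0 and every x) and the family is time-homogeneous Markov. In particular, for such a family, local bounded variation of all paths is equivalent to local absolute summability of the jumps of all paths. -/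
open Filter Set Function MeasureTheory Topology
open scoped ENNReal NNReal

/-- The deterministic family `(X^x)` is time-homogeneous Markov. -/
def MarkovFam (X : ℝ → ℝ → ℝ) : Prop :=
  ∀ x y s t : ℝ, 0 ≤ s → 0 ≤ t → X x s = X y t →
    ∀ h : ℝ, 0 ≤ h → X x (s + h) = X y (t + h)

/-- `f` is a càdlàg path on `[0,∞)`. -/
def CadlagPath (f : ℝ → ℝ) : Prop :=
  (∀ t : ℝ, 0 ≤ t → ContinuousWithinAt f (Set.Ici t) t) ∧
  (∀ t : ℝ, 0 < t → ∃ L : ℝ, Filter.Tendsto f (nhdsWithin t (Set.Iio t)) (nhds L))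

lemma cadlag_leftTendsto {f : ℝ → ℝ} (hc : CadlagPath f) {t : ℝ} (ht : 0 < t) :
    Tendsto f (𝓝[<] t) (𝓝 (leftLim f t)) := by
  obtain ⟨L, hL⟩ := hc.2 t ht
  rwa [leftLim_eq_of_tendsto hL]

/-- boundedness of a cadlag path on a compact interval -/
lemma cadlag_bounded {f : ℝ → ℝ} (hc : CadlagPath f) (τ : ℝ) :
    ∃ M : ℝ, ∀ t ∈ Icc (0:ℝ) τ, |f t| ≤ M := by
  have hK : IsCompact (Icc (0:ℝ) τ) := isCompact_Icc
  set b : ℝ → ℝ := fun t => max (|f t| + 1) (|leftLim f t| + 1) with hb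
  have key : ∀ t ∈ Icc (0:ℝ) τ, {r : ℝ | r ∈ Icc (0:ℝ) τ → |f r| ≤ b t} ∈ 𝓝 t := by
    intro t ht
    have h1 : ∀ᶠ r in 𝓝[≥] t, |f r| ≤ b t := by
      have := (hc.1 t ht.1).tendsto
      have h2 : ∀ᶠ r in 𝓝[≥] t, |f r - f t| < 1 :=
        this (Metric.ball_mem_nhds (f t) one_pos)
      filter_upwards [h2] with r hr
      have : |f r| ≤ |f t| + 1 := by
        have := abs_sub_abs_le_abs_sub (f r) (f t)
        linarith [le_of_lt hr]
      exact this.trans (le_max_left _ _)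
    have h2 : ∀ᶠ r in 𝓝[<] t, r ∈ Icc (0:ℝ) τ → |f r| ≤ b t := by
      rcases lt_or_ge 0 t with h | h
      · have := cadlag_leftTendsto hc h
        have h2 : ∀ᶠ r in 𝓝[<] t, |f r - leftLim f t| < 1 :=
          this (Metric.ball_mem_nhds _ one_pos)
        filter_upwards [h2] with r hr _
        have : |f r| ≤ |leftLim f t| + 1 := by
          have := abs_sub_abs_le_abs_sub (f r) (leftLim f t)
          linarith [le_of_lt hr]
        exact this.trans (le_max_right _ _)
      · have : ∀ᶠ r in 𝓝[<] t, r < 0 := by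
          refine eventually_nhdsWithin_of_forall (fun r hr => lt_of_lt_of_le hr h)
        filter_upwards [this] with r hr hmem
        exact absurd hmem.1 (not_le.mpr hr)
    have : ∀ᶠ r in 𝓝 t, r ∈ Icc (0:ℝ) τ → |f r| ≤ b t := by
      rw [← nhdsLT_sup_nhdsGE t, eventually_sup]
      exact ⟨h2, h1.mono fun r hr _ => hr⟩
    exact this
  obtain ⟨F, hFK, hcov⟩ := hK.elim_nhds_subcover _ key
  rcases F.eq_empty_or_nonempty with rfl | hF
  · refine ⟨0, fun t ht => ?_⟩
    have := hcov ht; simp at this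
  · refine ⟨F.sup' hF b, fun t ht => ?_⟩
    have := hcov ht
    simp only [Finset.mem_coe, Set.mem_iUnion] at this
    obtain ⟨s, hsF, hs⟩ := this
    exact le_trans (hs ht) (Finset.le_sup' b hsF)

/-- upward crossing lemma -/
lemma crossing_up_s7 {f : ℝ → ℝ} (hc : CadlagPath f) {s t y : ℝ} (hs : 0 ≤ s) (hst : s < t)
    (h1 : f s < y) (h2 : y < f t) :
    ∃ w ∈ Ioc s t, min (leftLim f w) (f w) ≤ y ∧ y ≤ max (leftLim f w) (f w) := by
  set A : Set ℝ := {r | r ∈ Icc s t ∧ f r ≤ y} with hA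
  have hAne : A.Nonempty := ⟨s, ⟨le_rfl, hst.le⟩, h1.le⟩
  have hAbdd : BddAbove A := ⟨t, fun r hr => hr.1.2⟩
  obtain ⟨w, hw⟩ := Real.exists_isLUB hAne hAbdd
  have hws : s ≤ w := hw.1 ⟨⟨le_rfl, hst.le⟩, h1.le⟩
  have hwt : w ≤ t := hw.2 fun r hr => hr.1.2
  have hright : ∀ r ∈ Ioc w t, y < f r := by
    intro r hr
    by_contra h
    push_neg at h
    exact absurd (hw.1 ⟨⟨hws.trans hr.1.le, hr.2⟩, h⟩) (not_le.mpr hr.1)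
  have hfw : y ≤ f w := by
    rcases eq_or_lt_of_le hwt with rfl | hwt'
    · exact h2.le
    · have htd : Tendsto f (𝓝[>] w) (𝓝 (f w)) :=
        ((hc.1 w (hs.trans hws)).tendsto).mono_left
          (nhdsWithin_mono w Ioi_subset_Ici_self)
      have hev : ∀ᶠ r in 𝓝[>] w, y ≤ f r := by
        filter_upwards [Ioo_mem_nhdsGT_of_mem ⟨le_rfl, hwt'⟩] with r hr
        exact (hright r ⟨hr.1, hr.2.le⟩).le
      exact ge_of_tendsto htd hev
  have hwgt : s < w := by
    rcases eq_or_lt_of_le hws with rfl | h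
    · exact absurd (lt_of_lt_of_le h1 hfw) (lt_irrefl _)
    · exact h
  rcases le_or_gt (f w) y with hle | hgt
  · exact ⟨w, ⟨hwgt, hwt⟩, (min_le_right _ _).trans hle, hfw.trans (le_max_right _ _)⟩
  · -- f w > y : use left limit
    have hwA : w ∉ A := fun h => absurd h.2 (not_le.mpr hgt)
    have hseq : ∀ n : ℕ, ∃ a ∈ A, w - 1/(n+1) < a ∧ a ≤ w := by
      intro n
      apply hw.exists_between
      have : (0:ℝ) < 1/(n+1) := by positivity
      linarith
    choose a ha hlt hle' using hseq
    have haw : ∀ n, a n < w := by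
      intro n
      rcases lt_or_eq_of_le (hle' n) with h | h
      · exact h
      · exact absurd (ha n) (by rw [h]; exact hwA)
    have htendsto : Tendsto a atTop (𝓝[<] w) := by
      rw [tendsto_nhdsWithin_iff]
      constructor
      · have h1' : Tendsto (fun n : ℕ => w - 1/(n+1:ℝ)) atTop (𝓝 w) := by
          have : Tendsto (fun n : ℕ => 1/(n+1:ℝ)) atTop (𝓝 0) :=
            tendsto_one_div_add_atTop_nhds_zero_nat
          simpa using (tendsto_const_nhds (x := w)).sub this
        refine tendsto_of_tendsto_of_tendsto_of_le_of_le h1' tendsto_const_nhds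
          (fun n => (hlt n).le) (fun n => (haw n).le)
      · exact Eventually.of_forall fun n => haw n
    have hlim : Tendsto (fun n => f (a n)) atTop (𝓝 (leftLim f w)) :=
      (cadlag_leftTendsto hc (lt_of_le_of_lt hs hwgt)).comp htendsto
    have hLle : leftLim f w ≤ y :=
      le_of_tendsto hlim (Eventually.of_forall fun n => (ha n).2)
    exact ⟨w, ⟨hwgt, hwt⟩, (min_le_left _ _).trans hLle, hgt.le.trans (le_max_right _ _)⟩


lemma cadlag_neg {f : ℝ → ℝ} (hc : CadlagPath f) : CadlagPath (fun r => -f r) := by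
  refine ⟨fun t ht => (hc.1 t ht).neg, fun t ht => ?_⟩
  obtain ⟨L, hL⟩ := hc.2 t ht
  exact ⟨-L, hL.neg⟩

lemma leftLim_neg' {f : ℝ → ℝ} (hc : CadlagPath f) {w : ℝ} (hw : 0 < w) :
    leftLim (fun r => -f r) w = - leftLim f w :=
  leftLim_eq_of_tendsto (cadlag_leftTendsto hc hw).neg

/-- two-sided crossing -/
lemma crossing_s7 {f : ℝ → ℝ} (hc : CadlagPath f) {s t y : ℝ} (hs : 0 ≤ s) (hst : s < t)
    (hy : y ∈ Ioo (min (f s) (f t)) (max (f s) (f t))) :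
    ∃ w ∈ Ioc s t, min (leftLim f w) (f w) ≤ y ∧ y ≤ max (leftLim f w) (f w) := by
  rcases le_or_gt (f s) (f t) with h | h
  · have h1 : f s < y := by rw [min_eq_left h] at hy; exact hy.1
    have h2 : y < f t := by rw [max_eq_right h] at hy; exact hy.2
    exact crossing_up_s7 hc hs hst h1 h2
  · have h1 : f t < y := by rw [min_eq_right h.le] at hy; exact hy.1
    have h2 : y < f s := by rw [max_eq_left h.le] at hy; exact hy.2
    obtain ⟨w, hw1, hw2, hw3⟩ := crossing_up_s7 (f := fun r => -f r) (cadlag_neg hc) (y := -y)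
      hs hst (neg_lt_neg h2) (neg_lt_neg h1)
    have hwpos : 0 < w := lt_of_le_of_lt hs hw1.1
    simp only [leftLim_neg' hc hwpos, min_neg_neg, max_neg_neg, neg_le_neg_iff] at hw2 hw3
    exact ⟨w, hw1, hw3, hw2⟩

lemma pointwise_count {f : ℝ → ℝ} (hc : CadlagPath f) {T τ M : ℝ} (hτT : τ ≤ T)
    (hM : ∀ t ∈ Icc (0:ℝ) τ, |f t| ≤ M)
    {k : ℕ} (hmult : ∀ y : ℝ, ∀ F : Finset ℝ,
      (↑F ⊆ {t : ℝ | t ∈ Icc (0:ℝ) τ ∧ f t = y}) → F.card ≤ k)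
    {n : ℕ} {u : ℕ → ℝ} (hu : Monotone u) (us : ∀ i, u i ∈ Icc (0:ℝ) τ) (y : ℝ) :
    ∑ i ∈ Finset.range n,
        (Ioo (min (f (u i)) (f (u (i+1)))) (max (f (u i)) (f (u (i+1))))).indicator
          (1:ℝ→ℝ≥0∞) y
      ≤ (Icc (-M) M).indicator (fun _ => (k:ℝ≥0∞)) y
        + ∑' (w : {w : ℝ // w ∈ Ioc (0:ℝ) T ∧ f w ≠ leftLim f w}),
            (Icc (min (leftLim f w.1) (f w.1)) (max (leftLim f w.1) (f w.1))).indicator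
              (1:ℝ→ℝ≥0∞) y := by
  classical
  set I : ℕ → Set ℝ :=
    fun i => Ioo (min (f (u i)) (f (u (i+1)))) (max (f (u i)) (f (u (i+1)))) with hI
  by_cases hS : ∃ i ∈ Finset.range n, y ∈ I i
  · -- y is between two values of f on [0,τ], so y ∈ Icc (-M) M
    obtain ⟨i0, _, hyi0⟩ := hS
    have hyIcc : y ∈ Icc (-M) M := by
      have h1 := hM (u i0) (us i0)
      have h2 := hM (u (i0+1)) (us (i0+1))
      rcases hyi0 with ⟨hlo, hhi⟩
      rcases abs_le.1 h1 with ⟨h1a, h1b⟩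
      rcases abs_le.1 h2 with ⟨h2a, h2b⟩
      constructor
      · rcases min_cases (f (u i0)) (f (u (i0+1))) with ⟨he, _⟩ | ⟨he, _⟩ <;> rw [he] at hlo <;> linarith
      · rcases max_cases (f (u i0)) (f (u (i0+1))) with ⟨he, _⟩ | ⟨he, _⟩ <;> rw [he] at hhi <;> linarith
    rw [indicator_of_mem hyIcc]
    set S := (Finset.range n).filter (fun i => y ∈ I i) with hSdef
    have hsum1 : ∑ i ∈ Finset.range n, (I i).indicator (1:ℝ→ℝ≥0∞) y = (S.card : ℝ≥0∞) := by
      rw [hSdef]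
      rw [← Finset.sum_filter_add_sum_filter_not (Finset.range n) (fun i => y ∈ I i)]
      have hz : ∑ i ∈ (Finset.range n).filter (fun i => ¬ y ∈ I i), (I i).indicator (1:ℝ→ℝ≥0∞) y = 0 := by
        refine Finset.sum_eq_zero fun i hi => ?_
        rw [indicator_of_notMem (Finset.mem_filter.1 hi).2]
      rw [hz, add_zero]
      have ho : ∀ i ∈ (Finset.range n).filter (fun i => y ∈ I i),
          (I i).indicator (1:ℝ→ℝ≥0∞) y = 1 := by
        intro i hi
        rw [indicator_of_mem (Finset.mem_filter.1 hi).2]; rfl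
      rw [Finset.sum_congr rfl ho, Finset.sum_const, nsmul_eq_mul, mul_one]
    rw [hsum1]
    -- split S into attainment indices A and jump indices B
    set A := S.filter (fun i => ∃ r, r ∈ Ioc (u i) (u (i+1)) ∧ f r = y) with hAdef
    set B := S \ A with hBdef
    have hcardS : S.card = B.card + A.card := by
      rw [hBdef]
      exact (Finset.card_sdiff_add_card_eq_card (Finset.filter_subset _ _)).symm
    -- bound on A
    set g : ℕ → ℝ := fun i =>
      if h : ∃ r, r ∈ Ioc (u i) (u (i+1)) ∧ f r = y then h.choose else 0 with hgdef
    have hgA : ∀ i ∈ A, g i ∈ Ioc (u i) (u (i+1)) ∧ f (g i) = y := by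
      intro i hi
      have h := (Finset.mem_filter.1 hi).2
      rw [hgdef]; simp only []
      rw [dif_pos h]
      exact h.choose_spec
    have horder : ∀ i j : ℕ, i < j → ∀ (hi : g i ∈ Ioc (u i) (u (i+1))) (hj : g j ∈ Ioc (u j) (u (j+1))), g i < g j := by
      intro i j hij hi hj
      calc g i ≤ u (i+1) := hi.2
        _ ≤ u j := hu hij
        _ < g j := hj.1
    have hginj : Set.InjOn g ↑A := by
      intro i hi j hj hgij
      by_contra hne
      rcases lt_or_gt_of_ne hne with h | h
      · exact absurd hgij (ne_of_lt (horder i j h (hgA i hi).1 (hgA j hj).1))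
      · exact absurd hgij.symm (ne_of_lt (horder j i h (hgA j hj).1 (hgA i hi).1))
    have hcardA : A.card ≤ k := by
      rw [← Finset.card_image_of_injOn hginj]
      refine hmult y (A.image g) ?_
      intro r hr
      simp only [Finset.coe_image, Set.mem_image, Finset.mem_coe] at hr
      obtain ⟨i, hi, rfl⟩ := hr
      obtain ⟨⟨hr1, hr2⟩, hr3⟩ := hgA i hi
      exact ⟨⟨(us i).1.trans hr1.le, hr2.trans (us (i+1)).2⟩, hr3⟩
    -- bound on B
    set W : ℕ → ℝ := fun i =>
      if h : ∃ w ∈ Ioc (u i) (u (i+1)), min (leftLim f w) (f w) ≤ y ∧ y ≤ max (leftLim f w) (f w)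
      then h.choose else 0 with hWdef
    have hWB : ∀ i ∈ B, W i ∈ Ioc (u i) (u (i+1)) ∧
        min (leftLim f (W i)) (f (W i)) ≤ y ∧ y ≤ max (leftLim f (W i)) (f (W i)) := by
      intro i hi
      rw [hBdef] at hi
      obtain ⟨hiS, hiA⟩ := Finset.mem_sdiff.1 hi
      have hyi : y ∈ I i := (Finset.mem_filter.1 hiS).2
      have hlt : u i < u (i+1) := by
        rcases lt_or_eq_of_le (hu (Nat.le_succ i)) with h | h
        · exact h
        · exfalso
          rw [hI] at hyi
          simp only [← h, min_self, max_self, Set.mem_Ioo] at hyi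
          exact lt_irrefl y (hyi.2.trans hyi.1)
      have hex := crossing_s7 hc (us i).1 hlt hyi
      rw [hWdef]; simp only []
      rw [dif_pos hex]
      obtain ⟨h1, h2⟩ := hex.choose_spec
      exact ⟨h1, h2⟩
    have hWD : ∀ i ∈ B, W i ∈ Ioc (0:ℝ) T ∧ f (W i) ≠ leftLim f (W i) := by
      intro i hi
      obtain ⟨hw1, hw2, hw3⟩ := hWB i hi
      obtain ⟨hiS, hiA⟩ := Finset.mem_sdiff.1 (hBdef ▸ hi)
      refine ⟨⟨lt_of_le_of_lt (us i).1 hw1.1, hw1.2.trans ((us (i+1)).2.trans hτT)⟩, ?_⟩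
      intro heq
      simp only [heq, min_self, max_self] at hw2 hw3
      have hfy : f (W i) = y := by
        rw [heq]
        exact (le_antisymm hw3 hw2).symm
      exact hiA (Finset.mem_filter.2 ⟨hiS, ⟨W i, hw1, hfy⟩⟩)
    have hWinj : Set.InjOn W ↑B := by
      intro i hi j hj hWij
      by_contra hne
      rcases lt_or_gt_of_ne hne with h | h
      · have : W i < W j := by
          calc W i ≤ u (i+1) := (hWB i hi).1.2
            _ ≤ u j := hu h
            _ < W j := (hWB j hj).1.1
        exact absurd hWij (ne_of_lt this)
      · have : W j < W i := by
          calc W j ≤ u (j+1) := (hWB j hj).1.2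
            _ ≤ u i := hu h
            _ < W i := (hWB i hi).1.1
        exact absurd hWij.symm (ne_of_lt this)
    -- build finset in the subtype
    set DT := {w : ℝ // w ∈ Ioc (0:ℝ) T ∧ f w ≠ leftLim f w} with hDT
    set F' : Finset DT := B.attach.image (fun i => (⟨W i.1, by
      have := hWD i.1 i.2; exact ⟨this.1, this.2⟩⟩ : DT)) with hF'
    have hcardF' : F'.card = B.card := by
      rw [hF', Finset.card_image_of_injOn, Finset.card_attach]
      intro i _ j _ hij
      have : W i.1 = W j.1 := congrArg Subtype.val hij
      exact Subtype.ext (hWinj i.2 j.2 this)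
    have hBle : (B.card : ℝ≥0∞) ≤ ∑' (w : DT),
        (Icc (min (leftLim f w.1) (f w.1)) (max (leftLim f w.1) (f w.1))).indicator (1:ℝ→ℝ≥0∞) y := by
      rw [← hcardF']
      calc (F'.card : ℝ≥0∞)
          = ∑ w ∈ F', (Icc (min (leftLim f w.1) (f w.1)) (max (leftLim f w.1) (f w.1))).indicator (1:ℝ→ℝ≥0∞) y := by
            rw [Finset.card_eq_sum_ones]
            push_cast
            refine Finset.sum_congr rfl fun w hw => ?_
            rw [hF'] at hw
            obtain ⟨i, _, rfl⟩ := Finset.mem_image.1 hw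
            obtain ⟨_, hw2, hw3⟩ := hWB i.1 i.2
            rw [indicator_of_mem (Set.mem_Icc.2 ⟨hw2, hw3⟩)]
            rfl
        _ ≤ _ := ENNReal.sum_le_tsum F'
    calc (S.card : ℝ≥0∞) = (B.card : ℝ≥0∞) + (A.card : ℝ≥0∞) := by rw [hcardS]; push_cast; ring
      _ ≤ ∑' (w : DT), (Icc (min (leftLim f w.1) (f w.1)) (max (leftLim f w.1) (f w.1))).indicator (1:ℝ→ℝ≥0∞) y + (k:ℝ≥0∞) := by
          exact add_le_add hBle (by exact_mod_cast hcardA)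
      _ = _ := by rw [add_comm]
  · push_neg at hS
    have : ∀ i ∈ Finset.range n, (I i).indicator (1:ℝ→ℝ≥0∞) y = 0 := fun i hi =>
      indicator_of_notMem (hS i hi) _
    rw [Finset.sum_congr rfl this]
    simp

/-- Core analytic lemma : multiplicity ≤ k + summable jumps ⇒ bounded variation. -/
lemma core_var {f : ℝ → ℝ} (hc : CadlagPath f) {T τ : ℝ} (hτ0 : 0 ≤ τ) (hτT : τ ≤ T)
    (hsum : Summable (fun s : Set.Ioc (0:ℝ) T => |f s - Function.leftLim f s|))
    {k : ℕ} (hmult : ∀ y : ℝ, ∀ F : Finset ℝ,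
      (↑F ⊆ {t : ℝ | t ∈ Icc (0:ℝ) τ ∧ f t = y}) → F.card ≤ k) :
    BoundedVariationOn f (Icc 0 τ) := by
  classical
  obtain ⟨M, hM⟩ := cadlag_bounded hc τ
  -- the jump set
  set D : Set ℝ := {w | w ∈ Ioc (0:ℝ) T ∧ f w ≠ leftLim f w} with hD
  have hDc : D.Countable := by
    have h1 : (Function.support (fun s : Set.Ioc (0:ℝ) T => |f s - Function.leftLim f s|)).Countable :=
      hsum.countable_support
    have : D ⊆ Subtype.val '' (Function.support
        (fun s : Set.Ioc (0:ℝ) T => |f s - Function.leftLim f s|)) := by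
      rintro w ⟨hw1, hw2⟩
      exact ⟨⟨w, hw1⟩, by simpa [Function.mem_support, sub_eq_zero] using hw2, rfl⟩
    exact (h1.image _).mono this
  haveI : Countable ↥D := hDc.to_subtype
  set Jset : ℝ → Set ℝ := fun w => Icc (min (leftLim f w) (f w)) (max (leftLim f w) (f w)) with hJset
  set Jtot : ℝ≥0∞ := ∑' (w : ↥D), volume (Jset w) with hJtot
  have hJfin : Jtot ≤ ENNReal.ofReal (∑' (s : Set.Ioc (0:ℝ) T), |f s - Function.leftLim f s|) := by
    have heq : ∀ w : ↥D, volume (Jset w.1) = ENNReal.ofReal |f w.1 - leftLim f w.1| := by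
      intro w
      rw [hJset]
      simp only [Real.volume_Icc]
      rw [max_sub_min_eq_abs]
    rw [hJtot, ENNReal.ofReal_tsum_of_nonneg (fun _ => abs_nonneg _) hsum]
    refine Summable.tsum_le_tsum_of_inj (fun w : ↥D => (⟨w.1, w.2.1⟩ : Set.Ioc (0:ℝ) T))
      (fun a b hab => by simpa [Subtype.ext_iff] using hab) (fun _ _ => zero_le)
      (fun w => le_of_eq (heq w)) ENNReal.summable ENNReal.summable
  -- main partition bound
  have main : eVariationOn f (Icc 0 τ) ≤ (k : ℝ≥0∞) * volume (Icc (-M) M) + Jtot := by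
    rw [eVariationOn]
    refine iSup_le ?_
    rintro ⟨n, u, hu, us⟩
    set I : ℕ → Set ℝ := fun i => Ioo (min (f (u i)) (f (u (i+1)))) (max (f (u i)) (f (u (i+1)))) with hI
    have hIvol : ∀ i, edist (f (u (i+1))) (f (u i)) = volume (I i) := by
      intro i
      rw [edist_dist, Real.dist_eq, hI]
      simp only [Real.volume_Ioo]
      rw [max_sub_min_eq_abs]
    calc ∑ i ∈ Finset.range n, edist (f (u (i+1))) (f (u i))
        = ∑ i ∈ Finset.range n, volume (I i) := by simp_rw [hIvol]
      _ = ∑ i ∈ Finset.range n, ∫⁻ y, (I i).indicator 1 y := by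
          refine Finset.sum_congr rfl fun i _ => ?_
          rw [lintegral_indicator_one measurableSet_Ioo]
      _ = ∫⁻ y, ∑ i ∈ Finset.range n, (I i).indicator 1 y := by
          rw [lintegral_finset_sum]
          intro i _
          exact (measurable_one.indicator measurableSet_Ioo)
      _ ≤ ∫⁻ y, ((Icc (-M) M).indicator (fun _ => (k:ℝ≥0∞)) y
            + ∑' (w : ↥D), (Jset w.1).indicator 1 y) := by
          refine lintegral_mono fun y => ?_
          exact pointwise_count hc hτT hM hmult hu us y
      _ = (k : ℝ≥0∞) * volume (Icc (-M) M) + Jtot := by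
          rw [lintegral_add_left (measurable_const.indicator measurableSet_Icc)]
          congr 1
          · rw [lintegral_indicator_const measurableSet_Icc]
          · rw [lintegral_tsum fun w => (measurable_one.indicator measurableSet_Icc).aemeasurable]
            exact tsum_congr fun w => lintegral_indicator_one measurableSet_Icc
  refine ne_top_of_le_ne_top ?_ main
  refine ENNReal.add_ne_top.mpr ⟨?_, ?_⟩
  · exact ENNReal.mul_ne_top (by simp) (by simp [Real.volume_Icc])
  · exact ne_top_of_le_ne_top ENNReal.ofReal_ne_top hJfin

section markov
variable {f : ℝ → ℝ}
  (hMf : ∀ s t : ℝ, 0 ≤ s → 0 ≤ t → f s = f t → ∀ h : ℝ, 0 ≤ h → f (s+h) = f (t+h))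

include hMf

lemma per {u g : ℝ} (hu : 0 ≤ u) (hg0 : 0 ≤ g) (hg : f u = f (u+g))
    {w : ℝ} (hw : u ≤ w) : f (w + g) = f w := by
  have := hMf (u+g) u (by linarith) hu hg.symm (w - u) (by linarith)
  have e1 : u + g + (w - u) = w + g := by ring
  have e2 : u + (w - u) = w := by ring
  rwa [e1, e2] at this

lemma periters {u g : ℝ} (hu : 0 ≤ u) (hg0 : 0 ≤ g) (hg : f u = f (u+g)) :
    ∀ n : ℕ, ∀ w, u ≤ w → f (w + n*g) = f w := by
  intro n
  induction n with
  | zero => intro w _; simp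
  | succ m ih =>
    intro w hw
    have e : w + ((m+1 : ℕ) : ℝ)*g = (w + g) + (m:ℝ)*g := by push_cast; ring
    rw [e, ih (w+g) (by linarith), per hMf hu hg0 hg hw]

end markov

/-- The Markov dichotomy: a constancy threshold τ and a multiplicity bound k. -/
lemma dichotomy {f : ℝ → ℝ} (hc : CadlagPath f)
    (hMf : ∀ s t : ℝ, 0 ≤ s → 0 ≤ t → f s = f t → ∀ h : ℝ, 0 ≤ h → f (s+h) = f (t+h))
    {T : ℝ} (hT : 0 < T) :
    ∃ (τ : ℝ) (k : ℕ), 0 ≤ τ ∧ τ ≤ T ∧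
      (∀ y : ℝ, ∀ F : Finset ℝ, (↑F ⊆ {t : ℝ | t ∈ Icc (0:ℝ) τ ∧ f t = y}) → F.card ≤ k) ∧
      (∀ t ∈ Icc τ T, f t = f τ) := by
  classical
  set G : Set ℝ := {g | 0 < g ∧ ∃ u, 0 ≤ u ∧ f u = f (u + g)} with hG
  have hgap : ∀ {a b : ℝ}, 0 ≤ a → a < b → f a = f b → (b - a) ∈ G := by
    intro a b ha hab hfab
    exact ⟨by linarith, a, ha, by rw [show a + (b - a) = b by ring]; exact hfab⟩
  rcases Set.eq_empty_or_nonempty G with hGe | hGne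
  · -- injective case
    refine ⟨T, 1, hT.le, le_rfl, ?_, ?_⟩
    · intro y F hF
      rw [Finset.card_le_one]
      intro a ha b hb
      by_contra hne
      rcases lt_or_gt_of_ne hne with h | h
      · have h2 := hgap ((hF ha).1.1) h ((hF ha).2.trans (hF hb).2.symm)
        rw [hGe] at h2; exact h2
      · have h2 := hgap ((hF hb).1.1) h ((hF hb).2.trans (hF ha).2.symm)
        rw [hGe] at h2; exact h2
    · intro t ht
      have : t = T := le_antisymm ht.2 ht.1
      rw [this]
  · have hGpos : ∀ g ∈ G, 0 < g := fun g hg => hg.1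
    have hGbdd : BddBelow G := ⟨0, fun g hg => (hGpos g hg).le⟩
    set p := sInf G with hp
    have hp0 : 0 ≤ p := le_csInf hGne fun g hg => (hGpos g hg).le
    rcases eq_or_lt_of_le hp0 with hpz | hppos
    · -- sInf G = 0 : eventually constant
      obtain ⟨g₁, hg₁⟩ := id hGne
      obtain ⟨hg₁pos, s, hs0, hscol⟩ := hg₁
      -- every gap in G is a period from s on
      have hall : ∀ g ∈ G, ∀ w, s ≤ w → f (w + g) = f w := by
        rintro g ⟨hgpos, u, hu0, hucol⟩ w hw
        rcases le_or_gt u s with hus | hus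
        · exact per hMf hu0 hgpos.le hucol (hus.trans hw)
        · obtain ⟨n, hn⟩ := exists_nat_ge ((u - w) / g₁)
          have hwn : u ≤ w + n * g₁ := by
            have := (div_le_iff₀ hg₁pos).1 hn
            linarith
          calc f (w + g) = f ((w + g) + n * g₁) :=
                (periters hMf hs0 hg₁pos.le hscol n (w+g) (by linarith)).symm
            _ = f ((w + n * g₁) + g) := by ring_nf
            _ = f (w + n * g₁) := per hMf hu0 hgpos.le hucol hwn
            _ = f w := periters hMf hs0 hg₁pos.le hscol n w hw
      -- f is constant on [s, ∞)
      have hconst : ∀ w w', s ≤ w → w ≤ w' → f w' = f w := by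
        intro w w' hw hww'
        rcases eq_or_lt_of_le hww' with rfl | hlt
        · rfl
        · -- approximate w' from the right
          have hseq : ∀ n : ℕ, ∃ t' : ℝ, w' < t' ∧ t' ≤ w' + 1/(n+1) ∧ f t' = f w := by
            intro n
            have hpos : (0:ℝ) < 1/(n+1) := by positivity
            obtain ⟨g, hgG, hglt⟩ := exists_lt_of_csInf_lt hGne
              (show sInf G < 1/(n+1) by rw [← hp, ← hpz]; exact hpos)
            have hgpos := hGpos g hgG
            have hxnn : (0:ℝ) ≤ (w' - w)/g := div_nonneg (by linarith) hgpos.le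
            set m : ℕ := ⌊(w' - w)/g⌋₊ + 1 with hm
            have hmg1 : w' - w < m * g := by
              have h1 : (w' - w)/g < (m:ℝ) := by
                rw [hm]; push_cast
                exact Nat.lt_floor_add_one _
              calc w' - w = ((w' - w)/g) * g := by field_simp
                _ < m * g := mul_lt_mul_of_pos_right h1 hgpos
            have hmg2 : (m:ℝ) * g ≤ w' - w + g := by
              have h1 : (m:ℝ) ≤ (w' - w)/g + 1 := by
                rw [hm]; push_cast
                linarith [Nat.floor_le hxnn]
              calc (m:ℝ) * g ≤ ((w' - w)/g + 1) * g := mul_le_mul_of_nonneg_right h1 hgpos.le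
                _ = w' - w + g := by field_simp
            refine ⟨w + m * g, by linarith, by linarith [hglt], ?_⟩
            have hjj : ∀ j : ℕ, f (w + j * g) = f w := by
              intro j
              induction j with
              | zero => simp
              | succ i ih =>
                have hig : (0:ℝ) ≤ (i:ℝ)*g := by positivity
                have e : w + ((i+1:ℕ):ℝ)*g = (w + (i:ℝ)*g) + g := by push_cast; ring
                rw [e, hall g hgG (w + (i:ℝ)*g) (by linarith), ih]
            exact hjj m
          choose t' ht'1 ht'2 ht'3 using hseq
          have hw'0 : 0 ≤ w' := hs0.trans (hw.trans hlt.le)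
          have htt : Tendsto t' atTop (𝓝[≥] w') := by
            rw [tendsto_nhdsWithin_iff]
            constructor
            · have hlim : Tendsto (fun n : ℕ => w' + 1/(n+1:ℝ)) atTop (𝓝 w') := by
                have : Tendsto (fun n : ℕ => 1/(n+1:ℝ)) atTop (𝓝 0) :=
                  tendsto_one_div_add_atTop_nhds_zero_nat
                simpa using (tendsto_const_nhds (x := w')).add this
              exact tendsto_of_tendsto_of_tendsto_of_le_of_le tendsto_const_nhds hlim
                (fun n => (ht'1 n).le) (fun n => ht'2 n)
            · exact Eventually.of_forall fun n => (ht'1 n).le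
          have h1 : Tendsto (fun n => f (t' n)) atTop (𝓝 (f w')) :=
            ((hc.1 w' hw'0).tendsto).comp htt
          have h2 : Tendsto (fun n => f (t' n)) atTop (𝓝 (f w)) := by
            simp only [ht'3]
            exact tendsto_const_nhds
          exact tendsto_nhds_unique h1 h2
      -- the absorbing value
      set c := f s with hc'
      set Z : Set ℝ := {t | 0 ≤ t ∧ f t = c} with hZ
      have hsZ : s ∈ Z := ⟨hs0, rfl⟩
      have hZne : Z.Nonempty := ⟨s, hsZ⟩
      have hZbdd : BddBelow Z := ⟨0, fun t ht => ht.1⟩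
      set τ0 := sInf Z with hτ0def
      have hτ00 : 0 ≤ τ0 := le_csInf hZne fun t ht => ht.1
      have hfτ0 : f τ0 = c := by
        have hseq : ∀ n : ℕ, ∃ z, z ∈ Z ∧ z < τ0 + 1/(n+1) := by
          intro n
          have hpos : (0:ℝ) < 1/(n+1) := by positivity
          obtain ⟨z, hz1, hz2⟩ := exists_lt_of_csInf_lt hZne (by linarith : τ0 < τ0 + 1/(n+1))
          exact ⟨z, hz1, hz2⟩
        choose z hz1 hz2 using hseq
        have hz3 : ∀ n, τ0 ≤ z n := fun n => csInf_le hZbdd (hz1 n)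
        have htt : Tendsto z atTop (𝓝[≥] τ0) := by
          rw [tendsto_nhdsWithin_iff]
          constructor
          · have hlim : Tendsto (fun n : ℕ => τ0 + 1/(n+1:ℝ)) atTop (𝓝 τ0) := by
              have : Tendsto (fun n : ℕ => 1/(n+1:ℝ)) atTop (𝓝 0) :=
                tendsto_one_div_add_atTop_nhds_zero_nat
              simpa using (tendsto_const_nhds (x := τ0)).add this
            exact tendsto_of_tendsto_of_tendsto_of_le_of_le tendsto_const_nhds hlim
              hz3 (fun n => (hz2 n).le)
          · exact Eventually.of_forall hz3
        have h1 : Tendsto (fun n => f (z n)) atTop (𝓝 (f τ0)) :=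
          ((hc.1 τ0 hτ00).tendsto).comp htt
        have h2 : Tendsto (fun n => f (z n)) atTop (𝓝 c) := by
          have : ∀ n, f (z n) = c := fun n => (hz1 n).2
          simp only [this]
          exact tendsto_const_nhds
        exact tendsto_nhds_unique h1 h2
      have habs : ∀ t, 0 ≤ t → f t = c → ∀ h, 0 ≤ h → f (t + h) = c := by
        intro t ht hft h hh
        have h1 : f (t + h) = f (s + h) := hMf t s ht hs0 (by rw [hft]) h hh
        have h2 : f (s + h) = f s := hconst s (s + h) le_rfl (by linarith)
        rw [h1, h2]
      refine ⟨min τ0 T, 1, le_min hτ00 hT.le, min_le_right _ _, ?_, ?_⟩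
      · -- multiplicity 1 on [0, min τ0 T]
        intro y F hF
        rw [Finset.card_le_one]
        intro a ha b hb
        by_contra hne
        have key : ∀ a' b', a' ∈ Icc (0:ℝ) (min τ0 T) → f a' = y →
            b' ∈ Icc (0:ℝ) (min τ0 T) → f b' = y → a' < b' → False := by
          intro a' b' ha' hfa' hb' hfb' hab
          have hgap' : (b' - a') ∈ G := hgap ha'.1 hab (by rw [hfa', hfb'])
          -- iterate the gap from a' to reach beyond s
          have hper' : ∀ j : ℕ, f (a' + j * (b' - a')) = f a' :=
            fun j => periters hMf ha'.1 (by linarith) (by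
              rw [show a' + (b' - a') = b' by ring, hfa', hfb']) j a' le_rfl
          obtain ⟨n, hn⟩ := exists_nat_ge ((s - a') / (b' - a'))
          have hbeyond : s ≤ a' + n * (b' - a') := by
            have := (div_le_iff₀ (by linarith : (0:ℝ) < b' - a')).1 hn
            linarith
          have h1 : f (a' + n * (b' - a')) = c :=
            hconst s (a' + n * (b' - a')) le_rfl hbeyond
          have h2 : f a' = c := by rw [← hper' n, h1]
          have h3 : a' ∈ Z := ⟨ha'.1, h2⟩
          have h4 : τ0 ≤ a' := csInf_le hZbdd h3
          have h5 : b' ≤ τ0 := hb'.2.trans (min_le_left _ _)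
          linarith
        rcases lt_or_gt_of_ne hne with h | h
        · exact key a b (hF ha).1 (hF ha).2 (hF hb).1 (hF hb).2 h
        · exact key b a (hF hb).1 (hF hb).2 (hF ha).1 (hF ha).2 h
      · -- constancy on [min τ0 T, T]
        intro t ht
        rcases le_or_gt τ0 T with hcase | hcase
        · rw [min_eq_left hcase] at ht ⊢
          have h1 : f t = c := by
            have := habs τ0 hτ00 hfτ0 (t - τ0) (by linarith [ht.1])
            rwa [show τ0 + (t - τ0) = t by ring] at this
          rw [h1, hfτ0]
        · rw [min_eq_right hcase.le] at ht ⊢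
          have : t = T := le_antisymm ht.2 ht.1
          rw [this]
    · -- minimal gap p > 0 : multiplicity ≤ ⌊T/p⌋ + 1
      refine ⟨T, ⌊T/p⌋.toNat + 1, hT.le, le_rfl, ?_, ?_⟩
      · intro y F hF
        have hfloornn : (0:ℤ) ≤ ⌊T/p⌋ := Int.floor_nonneg.2 (by positivity)
        have hinj : Set.InjOn (fun t => ⌊t/p⌋) ↑F := by
          intro a ha b hb hab
          by_contra hne
          have habs' : |a/p - b/p| < 1 := Int.abs_sub_lt_one_of_floor_eq_floor hab
          have hlt : |a - b| < p := by
            rw [div_sub_div_same, abs_div, abs_of_pos hppos] at habs'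
            calc |a - b| = |a - b| / p * p := by field_simp
              _ < 1 * p := mul_lt_mul_of_pos_right habs' hppos
              _ = p := one_mul p
          have key : ∀ a' b', a' ∈ (F:Set ℝ) → b' ∈ (F:Set ℝ) → a' < b' → p ≤ b' - a' := by
            intro a' b' ha' hb' hab'
            exact csInf_le hGbdd (hgap (hF ha').1.1 hab' (by rw [(hF ha').2, (hF hb').2]))
          rcases lt_or_gt_of_ne hne with h | h
          · have := key a b ha hb h
            rw [abs_of_neg (by linarith : a - b < 0)] at hlt
            linarith
          · have := key b a hb ha h
            rw [abs_of_pos (by linarith : 0 < a - b)] at hlt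
            linarith
        have hmaps : ∀ a ∈ F, ⌊a/p⌋ ∈ Finset.Icc (0:ℤ) ⌊T/p⌋ := by
          intro a ha
          have h1 := (hF ha).1
          refine Finset.mem_Icc.2 ⟨Int.floor_nonneg.2 (div_nonneg h1.1 hppos.le), ?_⟩
          exact Int.floor_le_floor (by gcongr; exact h1.2)
        calc F.card ≤ (Finset.Icc (0:ℤ) ⌊T/p⌋).card :=
              Finset.card_le_card_of_injOn _ hmaps hinj
          _ = ⌊T/p⌋.toNat + 1 := by
              rw [Int.card_Icc]
              omega
      · intro t ht
        have : t = T := le_antisymm ht.2 ht.1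
        rw [this]

lemma bv_summable {f : ℝ → ℝ} (hc : CadlagPath f) {T : ℝ} (hT : 0 < T)
    (hbv : BoundedVariationOn f (Icc 0 T)) :
    Summable (fun s : Set.Ioc (0:ℝ) T => |f s.1 - Function.leftLim f s.1|) := by
  classical
  set V := eVariationOn f (Icc 0 T) with hV
  set ψ : ℝ → ℝ≥0∞ := fun r => ENNReal.ofReal |f r - leftLim f r| with hψ
  -- finite sums of jumps are bounded by the variation
  have key : ∀ F : Finset (Set.Ioc (0:ℝ) T), ∑ s ∈ F, ψ s.1 ≤ V := by
    intro F
    refine ENNReal.le_of_forall_pos_le_add fun ε hε hVtop => ?_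
    set n := F.card with hn
    rcases Nat.eq_zero_or_pos n with hn0 | hn0
    · have hFe : F = ∅ := Finset.card_eq_zero.1 (by rw [← hn]; exact hn0)
      rw [hFe, Finset.sum_empty]
      exact zero_le
    · have hεn : (0:ℝ) < (ε:ℝ)/n := by positivity
      set e := F.orderIsoOfFin rfl with he
      set w : ℕ → ℝ := fun j => if h : j < n then ((e ⟨j, h⟩).1 : ℝ) else T with hw
      have hwmem : ∀ j (h : j < n), w j ∈ Set.Ioc (0:ℝ) T := by
        intro j h
        rw [hw]; simp only [dif_pos h]
        exact (e ⟨j, h⟩).1.2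
      have hwmono : ∀ j j' (h : j < j') (h' : j' < n), w j < w j' := by
        intro j j' h h'
        rw [hw]; simp only [dif_pos (h.trans h'), dif_pos h']
        have h2 : (e ⟨j, h.trans h'⟩ : {x // x ∈ F}) < e ⟨j', h'⟩ :=
          e.strictMono (show (⟨j, h.trans h'⟩ : Fin F.card) < ⟨j', h'⟩ from h)
        exact Subtype.coe_lt_coe.2 (Subtype.coe_lt_coe.2 h2)
      set pr : ℕ → ℝ := fun j => if j = 0 then 0 else w (j-1) with hpr
      have hprlt : ∀ j (h : j < n), pr j < w j := by
        intro j h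
        rcases Nat.eq_zero_or_pos j with rfl | hj
        · simp only [hpr, if_pos rfl]
          exact (hwmem 0 h).1
        · simp only [hpr, if_neg hj.ne']
          exact hwmono (j-1) j (Nat.sub_lt hj one_pos) h
      have hchoice : ∀ j, j < n → ∃ v, v ∈ Ioo (pr j) (w j) ∧
          |f v - leftLim f (w j)| ≤ (ε:ℝ)/n := by
        intro j h
        have hwpos : 0 < w j := (hwmem j h).1
        have htend := cadlag_leftTendsto hc hwpos
        have hev : ∀ᶠ x in 𝓝[<] (w j), |f x - leftLim f (w j)| ≤ (ε:ℝ)/n := by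
          have := htend (Metric.closedBall_mem_nhds (leftLim f (w j)) hεn)
          filter_upwards [this] with x hx
          simp only [Set.mem_preimage, Metric.mem_closedBall, Real.dist_eq] at hx
          exact hx
        have hIoo : Ioo (pr j) (w j) ∈ 𝓝[<] (w j) :=
          Ioo_mem_nhdsLT_of_mem ⟨hprlt j h, le_rfl⟩
        obtain ⟨v, hv1, hv2⟩ := (hev.and (eventually_of_mem hIoo fun x hx => hx)).exists
        exact ⟨v, hv2, hv1⟩
      choose v0 hv0 using hchoice
      set v : ℕ → ℝ := fun j => if h : j < n then v0 j h else T with hv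
      -- the zigzag sequence
      set u : ℕ → ℝ := fun i => if h : i < 2*n then (if Even i then v (i/2) else w (i/2)) else T
        with hu
      have hwT : ∀ j (h : j < n), w j ≤ T := fun j h => (hwmem j h).2
      have hvw : ∀ j (h : j < n), pr j < v j ∧ v j < w j := by
        intro j h
        rw [hv]; simp only [dif_pos h]
        exact ⟨(hv0 j h).1.1, (hv0 j h).1.2⟩
      have humem : ∀ i, u i ∈ Icc (0:ℝ) T := by
        intro i
        rw [hu]
        by_cases h : i < 2*n
        · simp only [dif_pos h]
          have hj : i/2 < n := Nat.div_lt_of_lt_mul (by linarith [h])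
          by_cases hpar : Even i
          · simp only [if_pos hpar]
            constructor
            · have := (hvw _ hj).1
              have hprnn : 0 ≤ pr (i/2) := by
                rcases Nat.eq_zero_or_pos (i/2) with h2 | h2
                · simp [hpr, h2]
                · simp only [hpr, if_neg h2.ne']
                  exact (hwmem _ ((Nat.sub_lt h2 one_pos).trans hj)).1.le
              linarith
            · exact ((hvw _ hj).2.trans_le (hwT _ hj)).le
          · simp only [if_neg hpar]
            exact ⟨(hwmem _ hj).1.le, hwT _ hj⟩
        · simp only [dif_neg h]
          exact ⟨hT.le, le_rfl⟩
      have humono : Monotone u := by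
        refine monotone_nat_of_le_succ fun i => ?_
        rw [hu]
        by_cases h1 : i + 1 < 2*n
        · have h0 : i < 2*n := by omega
          simp only [dif_pos h0, dif_pos h1]
          by_cases hpar : Even i
          · have hne : ¬ Even (i+1) := by simp [Nat.even_add_one, hpar]
            simp only [if_pos hpar, if_neg hne]
            obtain ⟨m, hm⟩ := hpar
            have he1 : (i+1)/2 = i/2 := by omega
            rw [he1]
            exact ((hvw _ (by omega)).2).le
          · have heven : Even (i+1) := Nat.even_add_one.2 hpar
            simp only [if_neg hpar, if_pos heven]
            obtain ⟨m, hm⟩ := heven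
            have he2 : (i+1)/2 = i/2 + 1 := by omega
            rw [he2]
            rcases lt_or_ge (i/2 + 1) n with hlt | hge
            · have := (hvw _ hlt).1
              have : pr (i/2 + 1) = w (i/2) := by rw [hpr]; simp
              have h3 := (hvw _ hlt).1
              rw [this] at h3
              exact h3.le
            · -- i/2 + 1 ≥ n but i+1 < 2n means i/2+1 < n+... contradiction?
              exfalso; omega
        · by_cases h0 : i < 2*n
          · simp only [dif_pos h0, dif_neg h1]
            have hi : i = 2*n - 1 := by omega
            by_cases hpar : Even i
            · simp only [if_pos hpar]
              have hj : i/2 < n := by omega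
              have := (hvw _ hj).2
              linarith [hwT _ hj]
            · simp only [if_neg hpar]
              exact hwT _ (by omega)
          · simp only [dif_neg h0, dif_neg h1]
            exact le_rfl
      -- the sum over F equals the sum over range n
      have hsumF : ∑ s ∈ F, ψ s.1 = ∑ j ∈ Finset.range n, ψ (w j) := by
        rw [← Finset.sum_coe_sort F (fun s => ψ s.1),
          ← Equiv.sum_comp e.toEquiv (fun x => ψ (x.1 : ℝ)),
          ← Fin.sum_univ_eq_sum_range (fun j => ψ (w j)) n]
        refine Finset.sum_congr rfl fun i _ => ?_
        congr 1
        rw [hw]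
        simp only [Fin.is_lt, dif_pos, Fin.eta]
        rfl
      -- each jump bounded by partition increment plus ε/n
      have hjump : ∀ j ∈ Finset.range n, ψ (w j) ≤
          edist (f (u (2*j+1))) (f (u (2*j))) + ENNReal.ofReal ((ε:ℝ)/n) := by
        intro j hj
        have hjn : j < n := Finset.mem_range.1 hj
        have hu1 : u (2*j+1) = w j := by
          rw [hu]
          have h1 : 2*j+1 < 2*n := by omega
          have hne : ¬ Even (2*j+1) := by
            rintro ⟨m, hm⟩
            omega
          simp only [dif_pos h1, if_neg hne]
          congr 1; omega
        have hu0 : u (2*j) = v j := by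
          rw [hu]
          have h1 : 2*j < 2*n := by omega
          have : Even (2*j) := even_two_mul j
          simp only [dif_pos h1, if_pos this]
          congr 1; omega
        rw [hu1, hu0, hψ]
        simp only []
        rw [edist_dist, Real.dist_eq]
        have hvj : |f (v j) - leftLim f (w j)| ≤ (ε:ℝ)/n := by
          rw [hv]; simp only [dif_pos hjn]; exact (hv0 j hjn).2
        have htri : |f (w j) - leftLim f (w j)| ≤ |f (w j) - f (v j)| + (ε:ℝ)/n := by
          calc |f (w j) - leftLim f (w j)|
              ≤ |f (w j) - f (v j)| + |f (v j) - leftLim f (w j)| := abs_sub_le _ _ _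
            _ ≤ |f (w j) - f (v j)| + (ε:ℝ)/n := by linarith
        calc ENNReal.ofReal |f (w j) - leftLim f (w j)|
            ≤ ENNReal.ofReal (|f (w j) - f (v j)| + (ε:ℝ)/n) := ENNReal.ofReal_le_ofReal htri
          _ = ENNReal.ofReal |f (w j) - f (v j)| + ENNReal.ofReal ((ε:ℝ)/n) := by
              rw [ENNReal.ofReal_add (abs_nonneg _) hεn.le]
      calc ∑ s ∈ F, ψ s.1 = ∑ j ∈ Finset.range n, ψ (w j) := hsumF
        _ ≤ ∑ j ∈ Finset.range n, (edist (f (u (2*j+1))) (f (u (2*j))) + ENNReal.ofReal ((ε:ℝ)/n)) :=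
            Finset.sum_le_sum hjump
        _ = ∑ j ∈ Finset.range n, edist (f (u (2*j+1))) (f (u (2*j))) + n * ENNReal.ofReal ((ε:ℝ)/n) := by
            rw [Finset.sum_add_distrib, Finset.sum_const, Finset.card_range, nsmul_eq_mul]
        _ ≤ ∑ i ∈ Finset.range (2*n), edist (f (u (i+1))) (f (u i)) + n * ENNReal.ofReal ((ε:ℝ)/n) := by
            gcongr
            have himg : ∑ j ∈ Finset.range n, edist (f (u (2*j+1))) (f (u (2*j)))
                = ∑ i ∈ (Finset.range n).image (fun j => 2*j), edist (f (u (i+1))) (f (u i)) := by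
              rw [Finset.sum_image (fun a _ b _ hab => by omega)]
            rw [himg]
            refine Finset.sum_le_sum_of_subset ?_
            intro i hi
            simp only [Finset.mem_image, Finset.mem_range] at hi ⊢
            obtain ⟨j, hj, rfl⟩ := hi
            omega
        _ ≤ V + ↑n * ENNReal.ofReal ((ε:ℝ)/↑n) :=
            add_le_add (by rw [hV]; exact eVariationOn.sum_le (f := f) (n := 2*n) humono humem) le_rfl
        _ ≤ V + ε := by
            have hne0 : (n:ℝ) ≠ 0 := by
              exact_mod_cast hn0.ne'
            have he3 : (↑n : ℝ≥0∞) * ENNReal.ofReal ((ε:ℝ)/↑n)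
                = ENNReal.ofReal ((n:ℝ) * ((ε:ℝ)/↑n)) := by
              rw [ENNReal.ofReal_mul (Nat.cast_nonneg n), ENNReal.ofReal_natCast]
            rw [he3, mul_div_cancel₀ _ hne0, ENNReal.ofReal_coe_nnreal]
  -- conclude summability
  have htsum : ∑' (s : Set.Ioc (0:ℝ) T), ψ s.1 ≤ V := by
    rw [ENNReal.tsum_eq_iSup_sum]
    exact iSup_le key
  have hne : ∑' (s : Set.Ioc (0:ℝ) T), ψ s.1 ≠ ⊤ := ne_top_of_le_ne_top hbv htsum
  have := ENNReal.summable_toReal hne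
  refine this.congr fun s => ?_
  rw [hψ]
  simp only []
  rw [ENNReal.toReal_ofReal (abs_nonneg _)]

lemma markov_bv {f : ℝ → ℝ} (hc : CadlagPath f)
    (hMf : ∀ s t : ℝ, 0 ≤ s → 0 ≤ t → f s = f t → ∀ h : ℝ, 0 ≤ h → f (s+h) = f (t+h))
    {T : ℝ} (hT : 0 < T)
    (hsum : Summable (fun s : Set.Ioc (0:ℝ) T => |f s.1 - Function.leftLim f s.1|)) :
    BoundedVariationOn f (Icc 0 T) := by
  obtain ⟨τ, k, hτ0, hτT, hmult, hconst⟩ := dichotomy hc hMf hT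
  have h1 : BoundedVariationOn f (Icc 0 τ) := core_var hc hτ0 hτT hsum hmult
  have h2 : eVariationOn f (Icc τ T) = 0 := by
    rw [eVariationOn.eq_zero_iff]
    intro a ha b hb
    rw [hconst a ha, hconst b hb, edist_self]
  have h3 := eVariationOn.Icc_add_Icc f (s := Set.univ) hτ0 hτT (Set.mem_univ τ)
  simp only [Set.univ_inter] at h3
  rw [BoundedVariationOn, ← h3, h2, add_zero]
  exact h1

theorem stmt7 (X : ℝ → ℝ → ℝ) (h0 : ∀ x, X x 0 = x) :
    (MarkovFam X ∧ (∀ x, CadlagPath (X x)) ∧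
        (∀ x T : ℝ, 0 < T → BoundedVariationOn (X x) (Set.Icc 0 T)))
    ↔ ((∀ x, CadlagPath (X x)) ∧
        (∀ x T : ℝ, 0 < T →
          Summable (fun s : Set.Ioc (0:ℝ) T => |X x s - Function.leftLim (X x) s|)) ∧
        MarkovFam X) := by
  constructor
  · rintro ⟨hM, hcad, hbv⟩
    exact ⟨hcad, fun x T hT => bv_summable (hcad x) hT (hbv x T hT), hM⟩
  · rintro ⟨hcad, hsum, hM⟩
    refine ⟨hM, hcad, fun x T hT => ?_⟩
    exact markov_bv (hcad x) (fun s t hs ht => hM x x s t hs ht) hT (hsum x T hT)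
end

section
/- For two distinct starting points x ≠ y in C̃ with the above construction, the ranges of the corresponding paths X^x and X^y are disjoint: X^x(s) ≠ X^y(t) for all s, t ≥ 0. -/
/-- The real number with ternary digits `2` exactly at positions where `a` is `true`. -/
noncomputable def cantorRep (a : ℕ → Bool) : ℝ :=
  ∑' j : ℕ, (if a j then (2:ℝ) else 0) / 3 ^ (j + 1)

/-- The path starting at `x`, jumping at time `q n` by `(1/3)^(h n + 1)`. -/
noncomputable def cantorPath (x : ℝ) (q : ℕ → ℝ) (h : ℕ → ℕ) (t : ℝ) : ℝ :=
  x + ∑' n : ℕ, Set.indicator (Set.Ici (q n)) (fun _ => ((1:ℝ)/3) ^ (h n + 1)) t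


lemma summable_geom_shift : Summable (fun j : ℕ => 2 * (1/3 : ℝ) ^ (j + 1)) := by
  have h := (summable_geometric_of_lt_one (r := (1/3:ℝ)) (by norm_num) (by norm_num)).mul_left 2
  exact (summable_nat_add_iff 1).mpr h

lemma summable_digits (c : ℕ → ℕ) (hc : ∀ j, c j ≤ 2) :
    Summable (fun j => (c j : ℝ) / 3 ^ (j + 1)) := by
  refine Summable.of_nonneg_of_le (fun j => by positivity) (fun j => ?_) summable_geom_shift
  rw [div_eq_mul_inv, ← inv_pow, ← one_div]
  exact mul_le_mul_of_nonneg_right (by exact_mod_cast hc j) (by positivity)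

lemma tsum_tail_geom (k : ℕ) : ∑' j : ℕ, (2 : ℝ) / 3 ^ (j + k + 2) = 1 / 3 ^ (k + 1) := by
  have h : ∀ j : ℕ, (2 : ℝ) / 3 ^ (j + k + 2) = (2 / 3 ^ (k + 2)) * (1/3 : ℝ) ^ j := by
    intro j
    rw [div_pow, one_pow]
    field_simp
    ring
  simp_rw [h]
  rw [tsum_mul_left, tsum_geometric_of_lt_one (by norm_num) (by norm_num)]
  rw [pow_succ, pow_succ]
  field_simp
  ring

lemma tsum_digit_lt (c d : ℕ → ℕ) (hc : ∀ j, c j ≤ 2) (hd : ∀ j, d j ≤ 2)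
    (k : ℕ) (hlow : ∀ j < k, c j = d j) (hk : c k < d k)
    (m : ℕ) (hm : k < m) (hcm : c m < 2) :
    ∑' j, (c j : ℝ) / 3 ^ (j + 1) < ∑' j, (d j : ℝ) / 3 ^ (j + 1) := by
  have Sc := summable_digits c hc
  have Sd := summable_digits d hd
  -- split both sums at k
  rw [← Summable.sum_add_tsum_nat_add k Sc, ← Summable.sum_add_tsum_nat_add k Sd]
  have hfin : ∑ i ∈ Finset.range k, (c i : ℝ) / 3 ^ (i + 1)
      = ∑ i ∈ Finset.range k, (d i : ℝ) / 3 ^ (i + 1) := by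
    refine Finset.sum_congr rfl fun i hi => ?_
    rw [hlow i (Finset.mem_range.mp hi)]
  rw [hfin]
  apply add_lt_add_right
  have Sct : Summable (fun i => (c (i + k) : ℝ) / 3 ^ (i + k + 1)) := (summable_nat_add_iff (f := fun j => (c j : ℝ) / 3 ^ (j + 1)) k).2 Sc
  have Sdt : Summable (fun i => (d (i + k) : ℝ) / 3 ^ (i + k + 1)) := (summable_nat_add_iff (f := fun j => (d j : ℝ) / 3 ^ (j + 1)) k).2 Sd
  rw [← Summable.sum_add_tsum_nat_add 1 Sct, ← Summable.sum_add_tsum_nat_add 1 Sdt]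
  simp only [Finset.range_one, Finset.sum_singleton, Nat.zero_add]
  have hg : Summable (fun i : ℕ => (2 : ℝ) / 3 ^ (i + k + 2)) := by
    have h : ∀ i : ℕ, (2 : ℝ) / 3 ^ (i + k + 2) = (2 / 3 ^ (k + 2)) * (1/3 : ℝ) ^ i := by
      intro i
      rw [div_pow, one_pow]
      field_simp
      ring
    simp_rw [h]
    exact (summable_geometric_of_lt_one (by norm_num) (by norm_num)).mul_left _
  have key : ∑' i : ℕ, (c (i + 1 + k) : ℝ) / 3 ^ (i + 1 + k + 1)
      < ∑' i : ℕ, (2 : ℝ) / 3 ^ (i + k + 2) := by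
    refine Summable.tsum_lt_tsum_of_nonneg (fun i => by positivity) (fun i => ?_) (i := m - k - 1) ?_ hg
    · have he : i + 1 + k + 1 = i + k + 2 := by omega
      rw [he]
      gcongr
      exact_mod_cast hc _
    · have h1 : m - k - 1 + 1 + k = m := by omega
      have he : m - k - 1 + k + 2 = m + 1 := by omega
      rw [h1, he]
      gcongr
      exact_mod_cast hcm
  calc (c k : ℝ) / 3 ^ (k + 1) + ∑' i : ℕ, (c (i + 1 + k) : ℝ) / 3 ^ (i + 1 + k + 1)
      < (c k : ℝ) / 3 ^ (k + 1) + ∑' i : ℕ, (2 : ℝ) / 3 ^ (i + k + 2) := by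
        exact add_lt_add_right key _
    _ = ((c k : ℝ) + 1) / 3 ^ (k + 1) := by rw [tsum_tail_geom]; ring
    _ ≤ (d k : ℝ) / 3 ^ (k + 1) := by
        gcongr
        have : c k + 1 ≤ d k := hk
        exact_mod_cast this
    _ ≤ (d k : ℝ) / 3 ^ (k + 1) + ∑' i : ℕ, (d (i + 1 + k) : ℝ) / 3 ^ (i + 1 + k + 1) := by
        have : 0 ≤ ∑' i : ℕ, (d (i + 1 + k) : ℝ) / 3 ^ (i + 1 + k + 1) :=
          tsum_nonneg (fun i => by positivity)
        linarith

lemma digits_eq (c d : ℕ → ℕ) (hc : ∀ j, c j ≤ 2) (hd : ∀ j, d j ≤ 2)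
    (hci : {j | c j ≠ 2}.Infinite) (hdi : {j | d j ≠ 2}.Infinite)
    (heq : ∑' j, (c j : ℝ) / 3 ^ (j + 1) = ∑' j, (d j : ℝ) / 3 ^ (j + 1)) : c = d := by
  by_contra hne
  have hex : ∃ j, c j ≠ d j := by
    by_contra h
    push_neg at h
    exact hne (funext h)
  classical
  let k := Nat.find hex
  have hk : c k ≠ d k := Nat.find_spec hex
  have hlow : ∀ j < k, c j = d j := fun j hj => by
    by_contra h
    exact absurd hj (not_lt.mpr (Nat.find_le h))
  rcases lt_or_gt_of_ne hk with h | h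
  · obtain ⟨m, hm2, hmk⟩ := hci.exists_gt k
    exact absurd heq (ne_of_lt (tsum_digit_lt c d hc hd k hlow h m hmk
      (lt_of_le_of_ne (hc m) hm2)))
  · obtain ⟨m, hm2, hmk⟩ := hdi.exists_gt k
    exact absurd heq.symm (ne_of_lt (tsum_digit_lt d c hd hc k (fun j hj => (hlow j hj).symm) h m hmk
      (lt_of_le_of_ne (hd m) hm2)))

open scoped Classical in
noncomputable def pathDigit (a : ℕ → Bool) (q : ℕ → ℝ) (h : ℕ → ℕ) (s : ℝ) (j : ℕ) : ℕ :=
  if a j then 2 else if ∃ n, h n = j ∧ q n ≤ s then 1 else 0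

lemma pathDigit_le (a : ℕ → Bool) (q : ℕ → ℝ) (h : ℕ → ℕ) (s : ℝ) (j : ℕ) :
    pathDigit a q h s j ≤ 2 := by
  unfold pathDigit
  split_ifs <;> norm_num

lemma cantorPath_eq_tsum (a : ℕ → Bool) (q : ℕ → ℝ) (h : ℕ → ℕ)
    (hinj : Function.Injective h) (hr : Set.range h = {j | a j = false}) (s : ℝ) :
    cantorPath (cantorRep a) q h s = ∑' j, (pathDigit a q h s j : ℝ) / 3 ^ (j + 1) := by
  classical
  set g : ℕ → ℝ := fun j => ((if ∃ n, h n = j ∧ q n ≤ s then 1 else 0 : ℕ) : ℝ) / 3 ^ (j + 1)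
    with hg_def
  have hg_le : ∀ j, (if ∃ n, h n = j ∧ q n ≤ s then 1 else 0 : ℕ) ≤ 2 := by
    intro j; split_ifs <;> norm_num
  have Sg : Summable g := summable_digits _ hg_le
  have hjump : (∑' n : ℕ, Set.indicator (Set.Ici (q n)) (fun _ => ((1:ℝ)/3) ^ (h n + 1)) s)
      = ∑' j, g j := by
    rw [← hinj.tsum_eq (f := g)]
    · refine tsum_congr fun n => ?_
      rw [hg_def]
      simp only [Set.indicator_apply, Set.mem_Ici]
      have hcond : (∃ m, h m = h n ∧ q m ≤ s) ↔ q n ≤ s := by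
        constructor
        · rintro ⟨m, hm, hqm⟩
          rwa [← hinj hm]
        · exact fun hq => ⟨n, rfl, hq⟩
      by_cases hq : q n ≤ s
      · simp only [if_pos hq, if_pos (hcond.mpr hq)]
        rw [div_pow, one_pow]
        norm_num
      · simp [if_neg hq, if_neg (fun hcc => hq (hcond.mp hcc))]
    · intro j hj
      rw [Function.mem_support] at hj
      rw [hg_def] at hj
      by_contra hjr
      apply hj
      have : ¬ ∃ n, h n = j ∧ q n ≤ s := by
        rintro ⟨n, hn, -⟩
        exact hjr ⟨n, hn⟩
      simp [this]
  have hrep : cantorRep a = ∑' j, ((if a j then 2 else 0 : ℕ) : ℝ) / 3 ^ (j + 1) := by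
    unfold cantorRep
    refine tsum_congr fun j => ?_
    split_ifs <;> norm_num
  have hrep_le : ∀ j, (if a j then 2 else 0 : ℕ) ≤ 2 := by intro j; split_ifs <;> norm_num
  have Sr : Summable (fun j => ((if a j then 2 else 0 : ℕ) : ℝ) / 3 ^ (j + 1)) :=
    summable_digits _ hrep_le
  unfold cantorPath
  rw [hjump, hrep, ← Summable.tsum_add Sr Sg]
  refine tsum_congr fun j => ?_
  rw [hg_def]
  simp only
  rw [← add_div]
  congr 1
  by_cases haj : a j
  · have hnoj : ¬ ∃ n, h n = j ∧ q n ≤ s := by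
      rintro ⟨n, hn, -⟩
      have : h n ∈ Set.range h := ⟨n, rfl⟩
      rw [hr, hn] at this
      simp [haj] at this
    simp [pathDigit, haj, hnoj]
  · simp only [pathDigit, if_neg haj, if_pos, haj]
    push_cast
    split_ifs <;> norm_num

lemma pathDigit_eq_two_iff (a : ℕ → Bool) (q : ℕ → ℝ) (h : ℕ → ℕ) (s : ℝ) (j : ℕ) :
    pathDigit a q h s j = 2 ↔ a j = true := by
  classical
  unfold pathDigit
  split_ifs with h1 h2 <;> simp [h1]

theorem stmt15 (a b : ℕ → Bool)
    (ha0 : {j | a j = false}.Infinite) (ha2 : {j | a j = true}.Infinite)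
    (hb0 : {j | b j = false}.Infinite) (hb2 : {j | b j = true}.Infinite)
    (hxy : cantorRep a ≠ cantorRep b)
    (q : ℕ → ℝ) (hqinj : Function.Injective q)
    (hqr : Set.range q = {r : ℝ | 0 < r ∧ ∃ m : ℚ, (m : ℝ) = r})
    (ha : ℕ → ℕ) (hainj : Function.Injective ha)
    (har : Set.range ha = {j | a j = false})
    (hb : ℕ → ℕ) (hbinj : Function.Injective hb)
    (hbr : Set.range hb = {j | b j = false}) :
    ∀ s t : ℝ, 0 ≤ s → 0 ≤ t →
      cantorPath (cantorRep a) q ha s ≠ cantorPath (cantorRep b) q hb t := by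
  intro s t hs ht heq
  rw [cantorPath_eq_tsum a q ha hainj har s, cantorPath_eq_tsum b q hb hbinj hbr t] at heq
  have hci : {j | pathDigit a q ha s j ≠ 2}.Infinite := by
    refine ha0.mono fun j hj => ?_
    simp only [Set.mem_setOf_eq] at hj ⊢
    rw [Ne, pathDigit_eq_two_iff, hj]
    simp
  have hdi : {j | pathDigit b q hb t j ≠ 2}.Infinite := by
    refine hb0.mono fun j hj => ?_
    simp only [Set.mem_setOf_eq] at hj ⊢
    rw [Ne, pathDigit_eq_two_iff, hj]
    simp
  have hcd := digits_eq _ _ (pathDigit_le a q ha s) (pathDigit_le b q hb t) hci hdi heq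
  have hab : a = b := by
    funext j
    have h2 : pathDigit a q ha s j = pathDigit b q hb t j := congrFun hcd j
    have := (pathDigit_eq_two_iff a q ha s j).symm.trans
      (h2 ▸ pathDigit_eq_two_iff b q hb t j)
    cases haj : a j <;> cases hbj : b j
    · rfl
    · rw [haj, hbj] at this; simp at this
    · rw [haj, hbj] at this; simp at this
    · rfl
  exact hxy (by rw [hab])
end

section
/- Let f : [0,∞) → ℝ be continuous and suppose there exists t₀ ∈ [0,∞] such that f is strictly monotone (increasing or decreasing) on [0,t₀) and constant on [t₀,∞). Then f satisfies the time-homogeneity property: f(s) = f(t) implies f(s+h) = f(t+h) for all h ≥ 0. Conversely, if f : [0,∞) → ℝ is continuous and satisfies the time-homogeneity property, then such a t₀ exists. -/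
open Set Filter Topology


/-- Injective + continuous on an ord-connected set of reals → strictly monotone or antitone. -/
lemma injOn_mono_or_anti (f : ℝ → ℝ) {S : Set ℝ} (hS : S.OrdConnected)
    (hc : ContinuousOn f S) (hi : Set.InjOn f S) :
    StrictMonoOn f S ∨ StrictAntiOn f S := by
  by_cases hex : ∃ x ∈ S, ∃ y ∈ S, x < y
  · obtain ⟨x₀, hx₀, y₀, hy₀, hxy₀⟩ := hex
    have key : ∀ a ∈ S, ∀ b ∈ S, a < b →
        (StrictMonoOn f (Icc (min a x₀) (max b y₀)) ∨
          StrictAntiOn f (Icc (min a x₀) (max b y₀))) := by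
      intro a ha b hb hab
      have hpS : min a x₀ ∈ S := by rcases min_cases a x₀ with ⟨h, _⟩ | ⟨h, _⟩ <;> simp [h, ha, hx₀]
      have hrS : max b y₀ ∈ S := by rcases max_cases b y₀ with ⟨h, _⟩ | ⟨h, _⟩ <;> simp [h, hb, hy₀]
      have hsub : Icc (min a x₀) (max b y₀) ⊆ S := hS.out hpS hrS
      exact ContinuousOn.strictMonoOn_of_injOn_Icc'
        (le_trans (min_le_left a x₀) (le_trans hab.le (le_max_left b y₀)))
        (hc.mono hsub) (hi.mono hsub)
    rcases lt_trichotomy (f x₀) (f y₀) with hlt | heq | hgt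
    · left
      intro a ha b hb hab
      have hmem : ∀ z ∈ S, min a x₀ ≤ z → z ≤ max b y₀ → z ∈ Icc (min a x₀) (max b y₀) :=
        fun z _ h1 h2 => ⟨h1, h2⟩
      rcases key a ha b hb hab with hmono | hanti
      · exact hmono ⟨min_le_left a x₀, hab.le.trans (le_max_left b y₀)⟩
          ⟨(min_le_left a x₀).trans hab.le, le_max_left b y₀⟩ hab
      · exfalso
        have := hanti ⟨min_le_right a x₀, hxy₀.le.trans (le_max_right b y₀)⟩
          ⟨(min_le_right a x₀).trans hxy₀.le, le_max_right b y₀⟩ hxy₀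
        linarith
    · exact absurd (hi hx₀ hy₀ heq) hxy₀.ne
    · right
      intro a ha b hb hab
      rcases key a ha b hb hab with hmono | hanti
      · exfalso
        have := hmono ⟨min_le_right a x₀, hxy₀.le.trans (le_max_right b y₀)⟩
          ⟨(min_le_right a x₀).trans hxy₀.le, le_max_right b y₀⟩ hxy₀
        linarith
      · exact hanti ⟨min_le_left a x₀, hab.le.trans (le_max_left b y₀)⟩
          ⟨(min_le_left a x₀).trans hab.le, le_max_left b y₀⟩ hab
  · push_neg at hex
    left
    intro a ha b hb hab
    exact absurd hab (not_lt.mpr (hex a ha b hb))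


/-- Strict monotonicity on `[0,t₀)` plus continuity gives `f s < f t₀` for `s ∈ [0,t₀)`. -/
lemma lt_endpoint (f : ℝ → ℝ) {t₀ : ℝ} (hc : ContinuousOn f (Ici 0))
    (hm : StrictMonoOn f (Ico 0 t₀)) {s : ℝ} (hs : s ∈ Ico 0 t₀) : f s < f t₀ := by
  set u := (s + t₀) / 2 with hu
  have hsu : s < u := by simp only [hu]; linarith [hs.2]
  have hut : u < t₀ := by simp only [hu]; linarith [hs.2]
  have hu0 : 0 ≤ u := le_of_lt (lt_of_le_of_lt hs.1 hsu)
  have h1 : f s < f u := hm hs ⟨hu0, hut⟩ hsu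
  have h2 : f u ≤ f t₀ := by
    have hcw : ContinuousWithinAt f (Ici 0) t₀ :=
      hc t₀ (le_of_lt (lt_of_le_of_lt hs.1 (hsu.trans hut)))
    have hsub : Ioo u t₀ ⊆ Ici 0 := fun x hx => le_of_lt (lt_of_le_of_lt hu0 hx.1)
    have htd : Tendsto f (𝓝[Ioo u t₀] t₀) (𝓝 (f t₀)) := hcw.mono hsub
    haveI : (𝓝[Ioo u t₀] t₀).NeBot := by
      refine mem_closure_iff_nhdsWithin_neBot.mp ?_
      rw [closure_Ioo hut.ne]
      exact ⟨hut.le, le_refl _⟩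
    exact ge_of_tendsto htd (eventually_nhdsWithin_of_forall fun x hx =>
      (hm ⟨hu0, hut⟩ ⟨hsub hx, hx.2⟩ hx.1).le)
  linarith

/-- anti version -/
lemma gt_endpoint (f : ℝ → ℝ) {t₀ : ℝ} (hc : ContinuousOn f (Ici 0))
    (hm : StrictAntiOn f (Ico 0 t₀)) {s : ℝ} (hs : s ∈ Ico 0 t₀) : f t₀ < f s := by
  have h := lt_endpoint (fun x => -(f x)) hc.neg (fun a ha b hb hab => by
    simpa using hm ha hb hab) hs
  linarith


/-- Time-homogeneity property for a deterministic real-valued path. -/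
def TimeHom (f : ℝ → ℝ) : Prop :=
  ∀ s t : ℝ, 0 ≤ s → 0 ≤ t → f s = f t → ∀ h : ℝ, 0 ≤ h → f (s + h) = f (t + h)

/-- If a continuous time-homogeneous path returns to a previous value, it is
constant from the first visit onwards. -/
lemma constancy (f : ℝ → ℝ) (hf : ContinuousOn f (Set.Ici 0)) (H : TimeHom f)
    {s t : ℝ} (hs : 0 ≤ s) (hst : s < t) (he : f s = f t) :
    ∀ x, s ≤ x → f x = f s := by
  classical
  set P : Set ℝ := {q | 0 < q ∧ ∀ x, s ≤ x → f (x + q) = f x} with hP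
  -- t - s is a period
  have hts : (t - s) ∈ P := by
    refine ⟨by linarith, fun x hx => ?_⟩
    have := H s t hs (hs.trans hst.le) he (x - s) (by linarith)
    have e1 : s + (x - s) = x := by ring
    have e2 : t + (x - s) = x + (t - s) := by ring
    rw [e1, e2] at this
    exact this.symm
  have hPne : P.Nonempty := ⟨t - s, hts⟩
  have hPbdd : BddBelow P := ⟨0, fun q hq => hq.1.le⟩
  -- natural multiples of periods are periods
  have hmul : ∀ q ∈ P, ∀ k : ℕ, ∀ x, s ≤ x → f (x + k * q) = f x := by
    intro q hq k
    induction k with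
    | zero => intro x hx; simp
    | succ n ih =>
      intro x hx
      have e : x + (n + 1 : ℕ) * q = (x + q) + n * q := by push_cast; ring
      rw [e, ih (x + q) (by nlinarith [hq.1]), hq.2 x hx]
  set α := sInf P with hα
  have hα0 : 0 ≤ α := le_csInf hPne fun q hq => hq.1.le
  rcases eq_or_lt_of_le hα0 with hz | hpos
  · -- infimum of periods is 0 : arbitrarily small periods, f constant on [s,∞)
    intro x hx
    rcases eq_or_lt_of_le hx with rfl | hsx
    · rfl
    refine eq_of_forall_dist_le fun ε hε => ?_
    have hcx : ContinuousWithinAt f (Set.Ici 0) x := hf x (hs.trans hx)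
    rw [Metric.continuousWithinAt_iff] at hcx
    obtain ⟨δ, hδ, hδ'⟩ := hcx ε hε
    obtain ⟨q, hqP, hqδ⟩ : ∃ q ∈ P, q < δ := by
      have : sInf P < δ := by rw [← hα, ← hz]; exact hδ
      exact (csInf_lt_iff hPbdd hPne).mp this
    set k : ℕ := ⌈(x - s) / q⌉₊ with hk
    set z : ℝ := s + k * q with hzdef
    have hfz : f z = f s := hmul q hqP k s le_rfl
    have hxz : x ≤ z := by
      have h1 : (x - s) / q ≤ (k : ℝ) := Nat.le_ceil _
      have := (div_le_iff₀ hqP.1).mp h1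
      simp only [hzdef]; linarith
    have hzx : z < x + q := by
      have h1 : (k : ℝ) < (x - s) / q + 1 :=
        Nat.ceil_lt_add_one (div_nonneg (by linarith) hqP.1.le)
      have := (lt_div_iff₀ hqP.1).mp (by linarith : (k : ℝ) - 1 < (x - s) / q)
      simp only [hzdef]; nlinarith [hqP.1]
    have hdist : dist z x < δ := by
      rw [Real.dist_eq, abs_of_nonneg (by linarith)]
      linarith
    have := hδ' (by simp only [Set.mem_Ici]; linarith : z ∈ Set.Ici 0) hdist
    rw [hfz] at this
    rw [dist_comm]
    exact (le_of_lt this)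
  · -- positive minimal "period" α
    have hαper : ∀ x, s ≤ x → f (x + α) = f x := by
      intro x hx
      refine (eq_of_forall_dist_le fun ε hε => ?_)
      have hcx : ContinuousWithinAt f (Set.Ici 0) (x + α) := hf _ (by simp only [Set.mem_Ici]; linarith)
      rw [Metric.continuousWithinAt_iff] at hcx
      obtain ⟨δ, hδ, hδ'⟩ := hcx ε hε
      obtain ⟨q, hqP, hqδ⟩ : ∃ q ∈ P, q < α + δ :=
        (csInf_lt_iff hPbdd hPne).mp (by rw [← hα]; linarith)
      have hαq : α ≤ q := csInf_le hPbdd hqP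
      have hdist : dist (x + q) (x + α) < δ := by
        rw [Real.dist_eq, abs_of_nonneg (by linarith)]; linarith
      have := hδ' (by simp only [Set.mem_Ici]; nlinarith [hqP.1] : x + q ∈ Set.Ici 0) hdist
      rw [hqP.2 x hx] at this
      rw [dist_comm]
      exact le_of_lt this
    have hαP : α ∈ P := ⟨hpos, hαper⟩
    -- maximum on [s, s+α]
    obtain ⟨m, hmI, hmax⟩ := isCompact_Icc.exists_isMaxOn
      (Set.nonempty_Icc.mpr (by linarith : s ≤ s + α))
      (hf.mono (fun x hx => by simp only [Set.mem_Ici]; linarith [hx.1] : Set.Icc s (s + α) ⊆ Set.Ici 0))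
    rw [isMaxOn_iff] at hmax
    -- f m is also a max on [m, m+α]
    have hmax' : ∀ x ∈ Set.Icc m (m + α), f x ≤ f m := by
      intro x hx
      by_cases hxa : x ≤ s + α
      · exact hmax x ⟨hmI.1.trans hx.1, hxa⟩
      · push_neg at hxa
        have : f x = f (x - α) := by
          have := hαper (x - α) (by linarith)
          rw [sub_add_cancel] at this; exact this
        rw [this]
        exact hmax _ ⟨by linarith, by linarith [hx.2, hmI.2]⟩
    -- minimum on [m, m+α]
    obtain ⟨l, hlI, hmin⟩ := isCompact_Icc.exists_isMinOn
      (Set.nonempty_Icc.mpr (by linarith : m ≤ m + α))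
      (hf.mono (fun x hx => by simp only [Set.mem_Ici]; linarith [hx.1, hmI.1] : Set.Icc m (m + α) ⊆ Set.Ici 0))
    rw [isMinOn_iff] at hmin
    by_cases hLM : f l = f m
    · -- f is constant on [m, m+α], hence on [s, ∞)
      have hconst : ∀ x ∈ Set.Icc m (m + α), f x = f m := fun x hx =>
        le_antisymm (hmax' x hx) (hLM ▸ hmin x hx)
      have hall : ∀ x, s ≤ x → f x = f m := by
        intro x hx
        by_cases hxm : m ≤ x
        · set k : ℕ := ⌊(x - m) / α⌋₊ with hk
          have h1 : (k : ℝ) * α ≤ x - m := by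
            have := Nat.floor_le (div_nonneg (by linarith : (0:ℝ) ≤ x - m) hpos.le)
            calc (k : ℝ) * α ≤ (x - m) / α * α := by
                  exact mul_le_mul_of_nonneg_right this hpos.le
              _ = x - m := div_mul_cancel₀ _ hpos.ne'
          have h2 : x - m < (k + 1 : ℝ) * α := by
            have := Nat.lt_floor_add_one ((x - m) / α)
            have h3 : (x - m) / α < (k : ℝ) + 1 := by exact_mod_cast this
            calc x - m = (x - m) / α * α := (div_mul_cancel₀ _ hpos.ne').symm
              _ < ((k : ℝ) + 1) * α := by
                  exact mul_lt_mul_of_pos_right h3 hpos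
              _ = (k + 1 : ℝ) * α := by ring
          have hy : f ((x - k * α) + k * α) = f (x - k * α) :=
            hmul α hαP k (x - k * α) (by linarith [hmI.1])
          have e : (x - k * α) + k * α = x := by ring
          rw [e] at hy
          rw [hy]
          exact hconst _ ⟨by linarith, by linarith⟩
        · push_neg at hxm
          rw [← hαper x hx]
          exact hconst _ ⟨by linarith [hmI.2], by linarith⟩
      intro x hx
      rw [hall x hx, hall s le_rfl]
    · -- nontrivial oscillation: construct a period q < α, contradiction
      exfalso
      have hLltM : f l < f m := lt_of_le_of_ne (hmin m ⟨le_rfl, by linarith⟩) hLM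
      have hma : f (m + α) = f m := hαper m hmI.1
      have hlm : m < l := by
        rcases eq_or_lt_of_le hlI.1 with rfl | h
        · exact absurd hLltM (lt_irrefl _)
        · exact h
      have hlma : l < m + α := by
        rcases eq_or_lt_of_le hlI.2 with h | h
        · exfalso; rw [h, hma] at hLltM; exact lt_irrefl _ hLltM
        · exact h
      set c : ℝ := (f l + f m) / 2 with hc
      have hc1 : f l < c := by simp only [hc]; linarith
      have hc2 : c < f m := by simp only [hc]; linarith
      -- u in [m, l] with f u = c, via IVT
      have hsubml : Set.Icc m l ⊆ Set.Ici 0 := fun x hx => by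
        simp only [Set.mem_Ici]; linarith [hx.1, hmI.1]
      have hsublma : Set.Icc l (m + α) ⊆ Set.Ici 0 := fun x hx => by
        simp only [Set.mem_Ici]; linarith [hx.1, hmI.1, hlm]
      obtain ⟨u, huI, hu⟩ : ∃ u ∈ Set.Icc m l, f u = c :=
        intermediate_value_Icc' hlm.le (hf.mono hsubml) ⟨hc1.le, hc2.le⟩
      obtain ⟨v, hvI, hv⟩ : ∃ v ∈ Set.Icc l (m + α), f v = c := by
        have := intermediate_value_Icc hlma.le (hf.mono hsublma)
        exact this ⟨hc1.le, by rw [hma]; exact hc2.le⟩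
      have hmu : m < u := by
        rcases eq_or_lt_of_le huI.1 with rfl | h
        · exfalso; rw [hu] at hc2; exact lt_irrefl _ hc2
        · exact h
      have hul : u < l := by
        rcases eq_or_lt_of_le huI.2 with rfl | h
        · exfalso; rw [hu] at hc1; exact lt_irrefl _ hc1
        · exact h
      have hlv : l < v := by
        rcases eq_or_lt_of_le hvI.1 with rfl | h
        · exfalso; rw [hv] at hc1; exact lt_irrefl _ hc1
        · exact h
      have hvma : v < m + α := by
        rcases eq_or_lt_of_le hvI.2 with h | h
        · exfalso; rw [h, hma] at hv; rw [hv] at hc2; exact lt_irrefl _ hc2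
        · exact h
      set q : ℝ := v - u with hq
      have hq0 : 0 < q := by simp only [hq]; linarith
      have hqα : q < α := by simp only [hq]; linarith
      -- q is a period on [s, ∞)
      have hthuv := H u v (by linarith [hmI.1]) (by linarith [hmI.1]) (by rw [hu, hv])
      have hqper : ∀ x, s ≤ x → f (x + q) = f x := by
        intro x hx
        have h2α : u ≤ x + 2 * α := by
          have : m ≤ s + α := hmI.2
          nlinarith
        have key := hthuv (x + 2 * α - u) (by linarith)
        have e1 : u + (x + 2 * α - u) = (x + α) + α := by ring
        have e2 : v + (x + 2 * α - u) = ((x + q) + α) + α := by simp only [hq]; ring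
        rw [e1, e2] at key
        rw [hαper ((x + q) + α) (by linarith), hαper (x + q) (by linarith)] at key
        rw [hαper (x + α) (by linarith), hαper x hx] at key
        exact key.symm
      have : α ≤ q := csInf_le hPbdd ⟨hq0, hqper⟩
      linarith

theorem stmt18 (f : ℝ → ℝ) (hf : ContinuousOn f (Set.Ici 0)) :
    TimeHom f ↔
      ((∃ t₀ : ℝ, 0 ≤ t₀ ∧
          (StrictMonoOn f (Set.Ico 0 t₀) ∨ StrictAntiOn f (Set.Ico 0 t₀)) ∧
          (∀ t : ℝ, t₀ ≤ t → f t = f t₀)) ∨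
        (StrictMonoOn f (Set.Ici 0) ∨ StrictAntiOn f (Set.Ici 0))) := by
  constructor
  · intro H
    by_cases hinj : Set.InjOn f (Set.Ici 0)
    · exact Or.inr (injOn_mono_or_anti f Set.ordConnected_Ici hf hinj)
    · left
      unfold Set.InjOn at hinj
      push_neg at hinj
      obtain ⟨a, ha, b, hb, hab, hne⟩ := hinj
      -- wlog a < b
      obtain ⟨a, b, ha, hb, hab, hlt⟩ :
          ∃ a b : ℝ, a ∈ Set.Ici 0 ∧ b ∈ Set.Ici 0 ∧ f a = f b ∧ a < b := by
        rcases Ne.lt_or_gt hne with h | h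
        · exact ⟨a, b, ha, hb, hab, h⟩
        · exact ⟨b, a, hb, ha, hab.symm, h⟩
      have hca : ∀ x, a ≤ x → f x = f a := constancy f hf H ha hlt hab
      set C : Set ℝ := {x | 0 ≤ x ∧ ∀ y, x ≤ y → f y = f x} with hC
      have hCa : a ∈ C := ⟨ha, hca⟩
      have hbdd : BddBelow C := ⟨0, fun x hx => hx.1⟩
      have hCne : C.Nonempty := ⟨a, hCa⟩
      set t₀ : ℝ := sInf C with ht₀
      have ht₀0 : 0 ≤ t₀ := le_csInf hCne fun x hx => hx.1
      have hval : ∀ x ∈ C, f x = f a := by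
        intro x hx
        rcases le_total x a with h | h
        · exact (hx.2 a h).symm
        · exact hca x h
      have hgt : ∀ u, t₀ < u → f u = f a := by
        intro u hu
        obtain ⟨x, hxC, hxu⟩ := (csInf_lt_iff hbdd hCne).mp hu
        rw [hxC.2 u hxu.le]
        exact hval x hxC
      have hft₀ : f t₀ = f a := by
        have hcw : ContinuousWithinAt f (Set.Ici 0) t₀ := hf t₀ (Set.mem_Ici.mpr ht₀0)
        have hsub : Set.Ioi t₀ ⊆ Set.Ici 0 := fun x hx =>
          le_of_lt (lt_of_le_of_lt ht₀0 hx)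
        have htd : Filter.Tendsto f (nhdsWithin t₀ (Set.Ioi t₀)) (nhds (f t₀)) :=
          hcw.mono hsub
        have htd' : Filter.Tendsto f (nhdsWithin t₀ (Set.Ioi t₀)) (nhds (f a)) := by
          refine Filter.Tendsto.congr' ?_ tendsto_const_nhds
          exact eventually_nhdsWithin_of_forall fun x hx => (hgt x hx).symm
        exact tendsto_nhds_unique htd htd'
      have hconst : ∀ t : ℝ, t₀ ≤ t → f t = f t₀ := by
        intro u hu
        rcases eq_or_lt_of_le hu with rfl | h
        · rfl
        · rw [hgt u h, hft₀]
      have hinj' : Set.InjOn f (Set.Ico 0 t₀) := by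
        intro x hx y hy hxy
        by_contra hne'
        rcases Ne.lt_or_gt hne' with h | h
        · have hxC : x ∈ C := ⟨hx.1, constancy f hf H hx.1 h hxy⟩
          exact absurd (csInf_le hbdd hxC) (not_le.mpr hx.2)
        · have hyC : y ∈ C := ⟨hy.1, constancy f hf H hy.1 h hxy.symm⟩
          exact absurd (csInf_le hbdd hyC) (not_le.mpr hy.2)
      exact ⟨t₀, ht₀0,
        injOn_mono_or_anti f Set.ordConnected_Ico
          (hf.mono fun x hx => Set.mem_Ici.mpr hx.1) hinj', hconst⟩
  · rintro (⟨t₀, ht₀0, hma, hconst⟩ | hma)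
    · intro s t hs ht he h hh
      by_cases hst₀ : s < t₀ <;> by_cases htt₀ : t < t₀
      · -- both in [0, t₀): injective there
        have : s = t := by
          rcases hma with hm | hm
          · exact hm.injOn ⟨hs, hst₀⟩ ⟨ht, htt₀⟩ he
          · exact hm.injOn ⟨hs, hst₀⟩ ⟨ht, htt₀⟩ he
        rw [this]
      · -- s < t₀ ≤ t : impossible
        exfalso
        push_neg at htt₀
        rw [hconst t htt₀] at he
        rcases hma with hm | hm
        · exact absurd he (ne_of_lt (lt_endpoint f hf hm ⟨hs, hst₀⟩))
        · exact absurd he.symm (ne_of_lt (gt_endpoint f hf hm ⟨hs, hst₀⟩))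
      · -- t < t₀ ≤ s : impossible
        exfalso
        push_neg at hst₀
        rw [hconst s hst₀] at he
        rcases hma with hm | hm
        · exact absurd he.symm (ne_of_lt (lt_endpoint f hf hm ⟨ht, htt₀⟩))
        · exact absurd he (ne_of_lt (gt_endpoint f hf hm ⟨ht, htt₀⟩))
      · -- both ≥ t₀ : constant region
        push_neg at hst₀ htt₀
        rw [hconst (s + h) (by linarith), hconst (t + h) (by linarith)]
    · intro s t hs ht he h hh
      have hst : s = t := by
        rcases hma with hm | hm
        · exact hm.injOn hs ht he
        · exact hm.injOn hs ht he
      rw [hst]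
end

section
/- Let f : [0,∞) → ℝ be continuous and satisfy the time-homogeneity property, and suppose f is not injective. Then f is finally constant; in particular a continuous function satisfying the time-homogeneity property cannot be jump-periodic with strictly positive period. -/
/-- The set of times `t` at which `f` repeats an earlier value. -/
def repAfter (f : ℝ → ℝ) : Set ℝ :=
  {t | 0 ≤ t ∧ ∃ s, 0 ≤ s ∧ s < t ∧ f s = f t}

/-- The set of times `s` whose value is taken again later. -/
def repBefore (f : ℝ → ℝ) : Set ℝ :=
  {s | 0 ≤ s ∧ ∃ t, s < t ∧ f s = f t}

/-- `f` is finally constant: injective on `[0,t₀)` and constant on `[t₀,∞)`. -/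
def FinallyConstant (f : ℝ → ℝ) : Prop :=
  ∃ t₀ : ℝ, 0 ≤ t₀ ∧ Set.InjOn f (Set.Ico 0 t₀) ∧ ∀ t, t₀ ≤ t → f t = f t₀

/-- `f` is jump-periodic with strictly positive period `t₁ - t₀`. -/
def JumpPeriodic (f : ℝ → ℝ) : Prop :=
  (repAfter f).Nonempty ∧ sInf (repBefore f) < sInf (repAfter f) ∧
  ∀ u, sInf (repAfter f) ≤ u →
    f u = f (u - (sInf (repAfter f) - sInf (repBefore f)))

theorem constant_from (f : ℝ → ℝ) (hf : ContinuousOn f (Set.Ici 0))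
    (hTH : TimeHom f) {s t : ℝ} (hs : 0 ≤ s) (hst : s < t) (hfeq : f s = f t) :
    ∀ u, s ≤ u → f u = f s := by
  set p := t - s with hp
  have hp0 : 0 < p := by simp only [hp]; linarith
  have ht0 : 0 ≤ t := le_trans hs hst.le
  have per : ∀ u, s ≤ u → f (u + p) = f u := by
    intro u hu
    have h0 := hTH s t hs ht0 hfeq (u - s) (by linarith)
    have h1 : s + (u - s) = u := by ring
    have h2 : t + (u - s) = u + p := by simp only [hp]; ring
    rw [h1, h2] at h0
    exact h0.symm
  have pern : ∀ n : ℕ, ∀ u, s ≤ u → f (u + n * p) = f u := by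
    intro n
    induction n with
    | zero => simp
    | succ k ih =>
      intro u hu
      have hk : (0:ℝ) ≤ k * p := mul_nonneg (Nat.cast_nonneg k) hp0.le
      have h1 : u + ((k:ℕ)+1 : ℕ) * p = (u + k * p) + p := by push_cast; ring
      rw [h1, per _ (by linarith), ih u hu]
  have red : ∀ y, s ≤ y → ∃ z, s ≤ z ∧ z ≤ s + p ∧ f y = f z := by
    intro y hy
    set n := ⌊(y - s) / p⌋₊ with hn
    have h1 : (n : ℝ) ≤ (y - s) / p := Nat.floor_le (div_nonneg (by linarith) hp0.le)
    have h2 : (y - s) / p < n + 1 := Nat.lt_floor_add_one _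
    have hnp : (n:ℝ) * p ≤ y - s := by
      have := mul_le_mul_of_nonneg_right h1 hp0.le
      rwa [div_mul_cancel₀ _ hp0.ne'] at this
    have hnp2 : y - s < ((n:ℝ) + 1) * p := by
      have := mul_lt_mul_of_pos_right h2 hp0
      rwa [div_mul_cancel₀ _ hp0.ne'] at this
    refine ⟨y - n * p, by linarith, by nlinarith, ?_⟩
    have := pern n (y - n * p) (by linarith)
    rw [sub_add_cancel] at this
    exact this
  have hsub : Set.Icc s (s + p) ⊆ Set.Ici 0 := fun x hx => le_trans hs hx.1
  have hfc : ContinuousOn f (Set.Icc s (s+p)) := hf.mono hsub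
  have hne : (Set.Icc s (s+p)).Nonempty := ⟨s, le_refl s, by linarith⟩
  obtain ⟨xM, hxM, hMmax⟩ := isCompact_Icc.exists_isMaxOn hne hfc
  obtain ⟨xm, hxm, hmmin⟩ := isCompact_Icc.exists_isMinOn hne hfc
  have hglobalM : ∀ y, s ≤ y → f y ≤ f xM := by
    intro y hy
    obtain ⟨z, hz1, hz2, hz3⟩ := red y hy
    rw [hz3]; exact hMmax ⟨hz1, hz2⟩
  have hglobalm : ∀ y, s ≤ y → f xm ≤ f y := by
    intro y hy
    obtain ⟨z, hz1, hz2, hz3⟩ := red y hy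
    rw [hz3]; exact hmmin ⟨hz1, hz2⟩
  have claim : ∀ a b, s ≤ a → a ≤ b → f a = f b := by
    intro a b ha hab
    rcases eq_or_lt_of_le hab with rfl | hlt
    · rfl
    set d := b - a with hd
    have hd0 : 0 < d := by simp only [hd]; linarith
    have hg : ContinuousOn (fun x => f (x + d) - f x) (Set.Icc s (s+p)) := by
      refine ContinuousOn.sub ?_ hfc
      refine ContinuousOn.comp hf ((continuous_id.add continuous_const).continuousOn) ?_
      intro x hx
      have hx0 : (0:ℝ) ≤ x := hsub hx
      show (0:ℝ) ≤ x + d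
      linarith
    have huIcc : Set.uIcc xm xM ⊆ Set.Icc s (s+p) := Set.uIcc_subset_Icc hxm hxM
    have hgm : (0:ℝ) ≤ f (xm + d) - f xm := by
      have := hglobalm (xm + d) (by linarith [hxm.1])
      linarith
    have hgM : f (xM + d) - f xM ≤ 0 := by
      have := hglobalM (xM + d) (by linarith [hxM.1])
      linarith
    have hmem : (0:ℝ) ∈ Set.uIcc (f (xm + d) - f xm) (f (xM + d) - f xM) :=
      Set.mem_uIcc.mpr (Or.inr ⟨hgM, hgm⟩)
    obtain ⟨x, hx, hgx⟩ := intermediate_value_uIcc (hg.mono huIcc) hmem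
    have hxIcc : x ∈ Set.Icc s (s+p) := huIcc hx
    have hx0 : (0:ℝ) ≤ x := le_trans hs hxIcc.1
    have perd := hTH x (x + d) hx0 (by linarith) (by dsimp at hgx; linarith) (a + p - x)
      (by linarith [hxIcc.2])
    have e1 : x + (a + p - x) = a + p := by ring
    have e2 : x + d + (a + p - x) = b + p := by simp only [hd]; ring
    rw [e1, e2] at perd
    have ea : f (a + p) = f a := per a ha
    have eb : f (b + p) = f b := per b (by linarith)
    rw [← ea, ← eb, perd]
  intro u hu
  exact (claim s u le_rfl hu).symm

theorem stmt19 (f : ℝ → ℝ) (hf : ContinuousOn f (Set.Ici 0))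
    (hTH : TimeHom f) (hni : ¬ Set.InjOn f (Set.Ici 0)) :
    FinallyConstant f ∧ ¬ JumpPeriodic f := by
  rw [Set.InjOn] at hni
  push_neg at hni
  obtain ⟨a, ha, b, hb, hab, hne⟩ := hni
  have key : ∃ s, 0 ≤ s ∧ ∀ u, s ≤ u → f u = f s := by
    rcases lt_or_gt_of_ne hne with h | h
    · exact ⟨a, ha, constant_from f hf hTH ha h hab⟩
    · exact ⟨b, hb, constant_from f hf hTH hb h hab.symm⟩
  obtain ⟨s, hs, hconst⟩ := key
  set S := {u : ℝ | 0 ≤ u ∧ ∀ t, u ≤ t → f t = f u} with hS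
  have hsS : s ∈ S := ⟨hs, hconst⟩
  have hSne : S.Nonempty := ⟨s, hsS⟩
  have hSbdd : BddBelow S := ⟨0, fun u hu => hu.1⟩
  set t₀ := sInf S with ht₀
  have ht₀0 : 0 ≤ t₀ := le_csInf hSne fun u hu => hu.1
  set c := f s with hc
  have hSc : ∀ u ∈ S, f u = c := by
    intro u hu
    rcases le_total u s with h | h
    · exact (hu.2 s h).symm
    · exact hconst u h
  have htop : ∀ u, t₀ < u → f u = c := by
    intro u hu
    obtain ⟨v, hvS, hvu⟩ := exists_lt_of_csInf_lt hSne hu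
    rw [hvS.2 u hvu.le]
    exact hSc v hvS
  have hft₀ : f t₀ = c := by
    have hcw : ContinuousWithinAt f (Set.Ioi t₀) t₀ :=
      (hf t₀ ht₀0).mono (fun x hx => le_trans ht₀0 (le_of_lt hx))
    have h1 : Filter.Tendsto f (nhdsWithin t₀ (Set.Ioi t₀)) (nhds (f t₀)) := hcw
    have h2 : Filter.Tendsto f (nhdsWithin t₀ (Set.Ioi t₀)) (nhds c) := by
      apply Filter.Tendsto.congr' _ tendsto_const_nhds
      filter_upwards [self_mem_nhdsWithin] with x hx
      exact (htop x hx).symm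
    exact tendsto_nhds_unique h1 h2
  have hconst₀ : ∀ t, t₀ ≤ t → f t = f t₀ := by
    intro t ht
    rcases eq_or_lt_of_le ht with rfl | h
    · rfl
    · rw [htop t h, hft₀]
  -- anyone who repeats is ≥ t₀
  have key2 : ∀ u, 0 ≤ u → (∃ v, u < v ∧ f u = f v) → t₀ ≤ u := by
    rintro u hu ⟨v, huv, heq⟩
    exact csInf_le hSbdd ⟨hu, constant_from f hf hTH hu huv heq⟩
  have hinj : Set.InjOn f (Set.Ico 0 t₀) := by
    intro x hx y hy heq
    by_contra hxy
    rcases lt_or_gt_of_ne hxy with h | h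
    · exact absurd (key2 x hx.1 ⟨y, h, heq⟩) (not_le.mpr hx.2)
    · exact absurd (key2 y hy.1 ⟨x, h, heq.symm⟩) (not_le.mpr hy.2)
  have hFC : FinallyConstant f := ⟨t₀, ht₀0, hinj, hconst₀⟩
  refine ⟨hFC, ?_⟩
  have hrb : repBefore f = Set.Ici t₀ := by
    ext u
    constructor
    · rintro ⟨hu, v, huv, heq⟩
      exact key2 u hu ⟨v, huv, heq⟩
    · intro hu
      refine ⟨le_trans ht₀0 hu, u + 1, by linarith, ?_⟩
      rw [hconst₀ u hu, hconst₀ (u+1) (by linarith [Set.mem_Ici.mp hu])]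
  have hra : repAfter f = Set.Ioi t₀ := by
    ext u
    constructor
    · rintro ⟨hu, v, hv0, hvu, heq⟩
      exact lt_of_le_of_lt (key2 v hv0 ⟨u, hvu, heq⟩) hvu
    · intro hu
      have hu' : t₀ < u := hu
      refine ⟨le_trans ht₀0 hu'.le, t₀, ht₀0, hu', (hconst₀ u hu'.le).symm⟩
  rintro ⟨-, hlt, -⟩
  rw [hrb, hra, csInf_Ici, csInf_Ioi] at hlt
  exact lt_irrefl _ hlt
end
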